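/- arXiv:1803.01359 — 2 statements merged into one kernel-verified Lean document; each statement's English description precedes it below -/
import Mathlib

section
/- There exists a constant C > 0 such that for all f₁, f₂ in the class below with ∂_x f₁ = 0 and ∂_x f₂ = 0, the following hold: (i) sup_{(x,y,z)} |f₁(x,y,z)| ≤ C (‖f₁‖_{H¹} + ‖∂_z f₁‖_{H¹}); (ii) ‖f₁ f₂‖_{L²} ≤ C (‖f₁‖_{H¹} + ‖∂_z f₁‖_{H¹}) ‖f₂‖_{L²}; (iii) ‖f₁ f₂‖_{L²} ≤ C (‖f₁‖_{L²} + ‖∂_z f₁‖_{L²}) ‖f₂‖_{H¹}. The constant C is independent of f₁, f₂. -/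
open MeasureTheory

noncomputable section

/-- Partial derivative in the first variable `x`. -/
def pdx (f : ℝ → ℝ → ℝ → ℂ) : ℝ → ℝ → ℝ → ℂ :=
  fun x y z => deriv (fun x' => f x' y z) x

/-- Partial derivative in the second variable `y`. -/
def pdy (f : ℝ → ℝ → ℝ → ℂ) : ℝ → ℝ → ℝ → ℂ :=
  fun x y z => deriv (fun y' => f x y' z) y

/-- Partial derivative in the third variable `z`. -/
def pdz (f : ℝ → ℝ → ℝ → ℂ) : ℝ → ℝ → ℝ → ℂ :=
  fun x y z => deriv (fun z' => f x y z') z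

/-- Iterated partial derivative `∂^α` for a multi-index `α ∈ ℕ³`. -/
def pderiv3 (α : ℕ × ℕ × ℕ) (f : ℝ → ℝ → ℝ → ℂ) : ℝ → ℝ → ℝ → ℂ :=
  (pdx^[α.1]) ((pdy^[α.2.1]) ((pdz^[α.2.2]) f))

/-- Squared `L²` norm on `Ω = 𝕋 × ℝ × 𝕋` (with periods `1` in `x` and `z`):
`‖f‖_{L²}² = ∫₀¹∫_ℝ∫₀¹ |f(x,y,z)|² dx dy dz`. -/
def L2sq (f : ℝ → ℝ → ℝ → ℂ) : ℝ :=
  ∫ x in Set.Ioc (0:ℝ) 1, ∫ y : ℝ, ∫ z in Set.Ioc (0:ℝ) 1, ‖f x y z‖ ^ 2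

/-- `L²` norm on `Ω = 𝕋 × ℝ × 𝕋`. -/
def L2norm (f : ℝ → ℝ → ℝ → ℂ) : ℝ :=
  Real.sqrt (L2sq f)

/-- The multi-indices `α ∈ ℕ³` of order `|α| ≤ N`. -/
def multiIndicesLe (N : ℕ) : Finset (ℕ × ℕ × ℕ) :=
  (Finset.range (N+1) ×ˢ Finset.range (N+1) ×ˢ Finset.range (N+1)).filter
    fun α => α.1 + α.2.1 + α.2.2 ≤ N

/-- Squared `H^N` norm: `‖f‖_{H^N}² = Σ_{|α| ≤ N} ‖∂^α f‖_{L²}²`. -/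
def HNsq (N : ℕ) (f : ℝ → ℝ → ℝ → ℂ) : ℝ :=
  ∑ α ∈ multiIndicesLe N, L2sq (pderiv3 α f)

/-- `H^N` norm. -/
def HN (N : ℕ) (f : ℝ → ℝ → ℝ → ℂ) : ℝ :=
  Real.sqrt (HNsq N f)

/-- `L²` norm of the gradient: `‖∇f‖_{L²}² = ‖∂_x f‖² + ‖∂_y f‖² + ‖∂_z f‖²`. -/
def gradL2norm (f : ℝ → ℝ → ℝ → ℂ) : ℝ :=
  Real.sqrt (L2sq (pdx f) + L2sq (pdy f) + L2sq (pdz f))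

/-- The Laplacian `Δ = ∂_x² + ∂_y² + ∂_z²`. -/
def lap (f : ℝ → ℝ → ℝ → ℂ) : ℝ → ℝ → ℝ → ℂ :=
  pdx (pdx f) + pdy (pdy f) + pdz (pdz f)

/-- The operator `∂_x² + ∂_z²`. -/
def dxxzz (f : ℝ → ℝ → ℝ → ℂ) : ℝ → ℝ → ℝ → ℂ :=
  pdx (pdx f) + pdz (pdz f)

/-- The class of smooth functions `f : ℝ³ → ℂ` which are `1`-periodic in `x` and in `z`
and, together with all partial derivatives, decay faster than any polynomial as
`|y| → ∞`. -/
structure GoodFn (f : ℝ → ℝ → ℝ → ℂ) : Prop where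
  smooth : ContDiff ℝ (⊤ : ℕ∞) (fun p : ℝ × ℝ × ℝ => f p.1 p.2.1 p.2.2)
  per_x : ∀ x y z, f (x + 1) y z = f x y z
  per_z : ∀ x y z, f x y (z + 1) = f x y z
  decay : ∀ (α : ℕ × ℕ × ℕ) (n : ℕ), ∃ C : ℝ, ∀ x y z : ℝ,
    ‖pderiv3 α f x y z‖ * |y| ^ n ≤ C



lemma hle1 : (1 : WithTop ℕ∞) ≤ ((⊤:ℕ∞) : WithTop ℕ∞) := by exact_mod_cast le_top

lemma normSq_eq' (c : ℂ) : ‖c‖^2 = c.re^2 + c.im^2 := by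
  rw [Complex.sq_norm, Complex.normSq_apply]; ring

lemma phi_hasDerivAt (g : ℝ → ℂ) (hg : ContDiff ℝ (⊤:ℕ∞) g) (t : ℝ) :
    HasDerivAt (fun s => ‖g s‖^2)
      (2*(g t).re*(deriv g t).re + 2*(g t).im*(deriv g t).im) t := by
  have hd : HasDerivAt g (deriv g t) t := (hg.differentiable (by simp) t).hasDerivAt
  have hre : HasDerivAt (fun s => (g s).re) ((deriv g t).re) t :=
    (Complex.reCLM.hasFDerivAt.comp_hasDerivAt t hd)
  have him : HasDerivAt (fun s => (g s).im) ((deriv g t).im) t :=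
    (Complex.imCLM.hasFDerivAt.comp_hasDerivAt t hd)
  have h1 : HasDerivAt (fun s => (g s).re * (g s).re + (g s).im * (g s).im)
      ((deriv g t).re * (g t).re + (g t).re * (deriv g t).re
        + ((deriv g t).im * (g t).im + (g t).im * (deriv g t).im)) t :=
    (hre.mul hre).add (him.mul him)
  have heq : (fun s => ‖g s‖^2) = fun s => (g s).re * (g s).re + (g s).im * (g s).im := by
    funext s; rw [normSq_eq']; ring
  rw [heq]
  convert h1 using 1; ring

lemma phiD_abs_le (a b c d : ℝ) : |2*a*c + 2*b*d| ≤ (a^2+b^2) + (c^2+d^2) := by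
  rw [abs_le]; constructor <;> nlinarith [sq_nonneg (a-c), sq_nonneg (a+c), sq_nonneg (b-d), sq_nonneg (b+d)]

lemma phiD_continuous (g : ℝ → ℂ) (hg : ContDiff ℝ (⊤:ℕ∞) g) :
    Continuous (fun t => 2*(g t).re*(deriv g t).re + 2*(g t).im*(deriv g t).im) := by
  have h1 : Continuous g := hg.continuous
  have h2 : Continuous (deriv g) := hg.continuous_deriv hle1
  fun_prop

lemma phi_continuous (g : ℝ → ℂ) (hg : Continuous g) : Continuous (fun t => ‖g t‖^2) := by
  fun_prop

/-- Periodic Agmon inequality. -/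
lemma coreZ (g : ℝ → ℂ) (hg : ContDiff ℝ (⊤:ℕ∞) g) (hper : ∀ t, g (t+1) = g t) (z : ℝ) :
    ‖g z‖^2 ≤ 2 * ∫ t in Set.Ioc (0:ℝ) 1, (‖g t‖^2 + ‖deriv g t‖^2) := by
  set φ : ℝ → ℝ := fun t => ‖g t‖^2 with hφ
  set D : ℝ → ℝ := fun t => 2*(g t).re*(deriv g t).re + 2*(g t).im*(deriv g t).im with hD
  have hφc : Continuous φ := phi_continuous g hg.continuous
  have hDc : Continuous D := phiD_continuous g hg
  have hderiv : ∀ t, HasDerivAt φ (D t) t := fun t => phi_hasDerivAt g hg t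
  have hgper : Function.Periodic g 1 := hper
  have hderper : ∀ t, deriv g (t+1) = deriv g t := by
    intro t
    have : (fun s => g (s+1)) = g := funext hper
    rw [← deriv_comp_add_const (f := g) (a := 1), this]
  have hDper : Function.Periodic (fun t => |D t|) 1 := by
    intro t; simp only [hD, hper, hderper]
  have hφper : Function.Periodic φ 1 := by intro t; simp only [hφ, hper]
  -- key: ∀ w, φ z ≤ φ w + ∫_0^1 |D|
  have key : ∀ w : ℝ, φ z ≤ φ w + ∫ t in (0:ℝ)..1, |D t| := by
    intro w
    set n : ℤ := ⌊z - w⌋ with hn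
    set z' : ℝ := z - n with hz'
    have hzz' : φ z' = φ z := by
      have := hφper.sub_int_mul_eq (x := z) n
      simpa [hz'] using this
    have hwz' : w ≤ z' := by
      have := Int.floor_le (z - w); simp only [hz', hn]; linarith
    have hz'w : z' ≤ w + 1 := by
      have := Int.sub_one_lt_floor (z - w); simp only [hz', hn]; linarith
    have hftc : ∫ t in w..z', D t = φ z' - φ w :=
      intervalIntegral.integral_eq_sub_of_hasDerivAt (fun t _ => hderiv t)
        (hDc.intervalIntegrable w z')
    have h1 : φ z' - φ w ≤ ∫ t in w..z', |D t| := by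
      rw [← hftc]
      exact intervalIntegral.integral_mono_on hwz' (hDc.intervalIntegrable w z')
        (hDc.abs.intervalIntegrable w z') (fun t _ => le_abs_self _)
    have h2 : ∫ t in w..z', |D t| ≤ ∫ t in w..(w+1), |D t| :=
      intervalIntegral.integral_mono_interval (le_refl w) hwz' hz'w
        (Filter.Eventually.of_forall (fun t => abs_nonneg _))
        (hDc.abs.intervalIntegrable w (w+1))
    have h3 : ∫ t in w..(w+1), |D t| = ∫ t in (0:ℝ)..1, |D t| := by
      have := hDper.intervalIntegral_add_eq w 0
      simpa using this
    rw [hzz'] at h1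
    linarith [h1, h2, h3.le, h3.ge]
  -- integrate over w ∈ Ioc 0 1
  set I' : ℝ := ∫ t in (0:ℝ)..1, |D t| with hI'
  have hvol : (volume (Set.Ioc (0:ℝ) 1)).toReal = 1 := by
    simp [Real.volume_Ioc]
  have step : φ z ≤ (∫ w in Set.Ioc (0:ℝ) 1, φ w) + I' := by
    have h0 : φ z = ∫ _ in Set.Ioc (0:ℝ) 1, φ z := by
      rw [setIntegral_const, measureReal_def, hvol]; simp
    have hmono : ∫ _ in Set.Ioc (0:ℝ) 1, φ z ≤ ∫ w in Set.Ioc (0:ℝ) 1, (φ w + I') := by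
      apply setIntegral_mono_on (integrableOn_const (by simp [Real.volume_Ioc]))
        ((hφc.add continuous_const).integrableOn_Ioc) measurableSet_Ioc
      intro w _; exact key w
    have hsplit : ∫ w in Set.Ioc (0:ℝ) 1, (φ w + I') = (∫ w in Set.Ioc (0:ℝ) 1, φ w) + I' := by
      rw [integral_add hφc.integrableOn_Ioc (integrableOn_const (by simp [Real.volume_Ioc]))]
      rw [setIntegral_const, measureReal_def, hvol]; simp
    linarith [hmono, h0.le, h0.ge, hsplit.le, hsplit.ge]
  -- bound both terms by the energy integral
  have hb1 : ∫ w in Set.Ioc (0:ℝ) 1, φ w ≤ ∫ t in Set.Ioc (0:ℝ) 1, (‖g t‖^2 + ‖deriv g t‖^2) := by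
    apply setIntegral_mono_on hφc.integrableOn_Ioc
      ((phi_continuous g hg.continuous).add (phi_continuous _ (hg.continuous_deriv hle1))).integrableOn_Ioc
      measurableSet_Ioc
    intro t _; simp only [hφ, Pi.add_apply]; nlinarith [sq_nonneg ‖deriv g t‖]
  have hb2 : I' ≤ ∫ t in Set.Ioc (0:ℝ) 1, (‖g t‖^2 + ‖deriv g t‖^2) := by
    rw [hI', intervalIntegral.integral_of_le zero_le_one]
    apply setIntegral_mono_on (hDc.abs).integrableOn_Ioc
      ((phi_continuous g hg.continuous).add (phi_continuous _ (hg.continuous_deriv hle1))).integrableOn_Ioc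
      measurableSet_Ioc
    intro t _
    have := phiD_abs_le (g t).re (g t).im (deriv g t).re (deriv g t).im
    rw [Pi.add_apply, normSq_eq' (g t), normSq_eq' (deriv g t)]
    simpa [hD] using this
  have hz0 : φ z = ‖g z‖^2 := rfl
  linarith

/-- Line (Agmon-type) inequality with decay at `-∞`. -/
lemma coreY (u : ℝ → ℂ) (hu : ContDiff ℝ (⊤:ℕ∞) u) (C : ℝ)
    (hdec : ∀ t : ℝ, ‖u t‖ * |t| ≤ C)
    (hint : Integrable (fun t => ‖u t‖^2 + ‖deriv u t‖^2)) (y : ℝ) :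
    ‖u y‖^2 ≤ ∫ t : ℝ, (‖u t‖^2 + ‖deriv u t‖^2) := by
  set φ : ℝ → ℝ := fun t => ‖u t‖^2 with hφ
  set D : ℝ → ℝ := fun t => 2*(u t).re*(deriv u t).re + 2*(u t).im*(deriv u t).im with hD
  have hDc : Continuous D := phiD_continuous u hu
  have hderiv : ∀ t, HasDerivAt φ (D t) t := fun t => phi_hasDerivAt u hu t
  set I : ℝ := ∫ t : ℝ, (‖u t‖^2 + ‖deriv u t‖^2) with hI
  have hC : 0 ≤ C := le_trans (mul_nonneg (norm_nonneg _) (abs_nonneg _)) (hdec 0)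
  have habs : ∀ t, |D t| ≤ ‖u t‖^2 + ‖deriv u t‖^2 := by
    intro t
    have := phiD_abs_le (u t).re (u t).im (deriv u t).re (deriv u t).im
    rw [normSq_eq' (u t), normSq_eq' (deriv u t)]
    simpa [hD] using this
  -- for every a ≤ y : φ y ≤ φ a + I
  have key : ∀ a : ℝ, a ≤ y → φ y ≤ φ a + I := by
    intro a hay
    have hftc : ∫ t in a..y, D t = φ y - φ a :=
      intervalIntegral.integral_eq_sub_of_hasDerivAt (fun t _ => hderiv t)
        (hDc.intervalIntegrable a y)
    have h1 : ∫ t in a..y, D t ≤ ∫ t in a..y, (‖u t‖^2 + ‖deriv u t‖^2) :=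
      intervalIntegral.integral_mono_on hay (hDc.intervalIntegrable a y)
        (hint.intervalIntegrable) (fun t _ => (le_abs_self _).trans (habs t))
    have h2 : ∫ t in a..y, (‖u t‖^2 + ‖deriv u t‖^2) ≤ I := by
      rw [intervalIntegral.integral_of_le hay]
      exact setIntegral_le_integral hint
        (Filter.Eventually.of_forall (fun t => by positivity))
    linarith
  -- ε-argument
  have main : ∀ ε : ℝ, 0 < ε → φ y ≤ I + ε := by
    intro ε hε
    set a : ℝ := min (y - 1) (-((C+1)/Real.sqrt ε)) with ha
    have hsq : 0 < Real.sqrt ε := Real.sqrt_pos.2 hε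
    have hapos : 0 < (C+1)/Real.sqrt ε := by positivity
    have hay : a ≤ y := le_trans (min_le_left _ _) (by linarith)
    have haneg : a ≤ -((C+1)/Real.sqrt ε) := min_le_right _ _
    have haneg' : a < 0 := lt_of_le_of_lt haneg (by linarith)
    have habs_a : (C+1)/Real.sqrt ε ≤ |a| := by
      rw [abs_of_neg haneg']; linarith
    have hφa : φ a ≤ ε := by
      have h1 : ‖u a‖ * |a| ≤ C := hdec a
      have h2 : ‖u a‖ * ((C+1)/Real.sqrt ε) ≤ C := by
        calc ‖u a‖ * ((C+1)/Real.sqrt ε) ≤ ‖u a‖ * |a| :=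
              mul_le_mul_of_nonneg_left habs_a (norm_nonneg _)
          _ ≤ C := h1
      have h3 : ‖u a‖ * (C+1) ≤ C * Real.sqrt ε := by
        have h2' := mul_le_mul_of_nonneg_right h2 hsq.le
        calc ‖u a‖ * (C+1) = ‖u a‖ * ((C+1)/Real.sqrt ε) * Real.sqrt ε := by
              field_simp
          _ ≤ C * Real.sqrt ε := h2'
      have h4 : ‖u a‖ ≤ Real.sqrt ε := by nlinarith [norm_nonneg (u a), hsq]
      calc φ a = ‖u a‖^2 := rfl
        _ ≤ Real.sqrt ε ^ 2 := by nlinarith [norm_nonneg (u a)]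
        _ = ε := Real.sq_sqrt hε.le
    linarith [key a hay]
  have : φ y ≤ I := by
    by_contra h
    push_neg at h
    have := main ((φ y - I)/2) (by linarith)
    linarith
  exact this

abbrev U (F : ℝ → ℝ → ℝ → ℂ) : ℝ × ℝ × ℝ → ℂ := fun p => F p.1 p.2.1 p.2.2

lemma hle2 : ((⊤:ℕ∞) : WithTop ℕ∞) + 1 ≤ ((⊤:ℕ∞) : WithTop ℕ∞) := by
  exact_mod_cast le_top

lemma sect_x {F : ℝ → ℝ → ℝ → ℂ} (hF : ContDiff ℝ (⊤:ℕ∞) (U F)) (y z : ℝ) :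
    ContDiff ℝ (⊤:ℕ∞) (fun x => F x y z) :=
  hF.comp (contDiff_id.prodMk (contDiff_const.prodMk contDiff_const))

lemma sect_y {F : ℝ → ℝ → ℝ → ℂ} (hF : ContDiff ℝ (⊤:ℕ∞) (U F)) (x z : ℝ) :
    ContDiff ℝ (⊤:ℕ∞) (fun y => F x y z) :=
  hF.comp (contDiff_const.prodMk (contDiff_id.prodMk contDiff_const))

lemma sect_z {F : ℝ → ℝ → ℝ → ℂ} (hF : ContDiff ℝ (⊤:ℕ∞) (U F)) (x y : ℝ) :
    ContDiff ℝ (⊤:ℕ∞) (fun z => F x y z) :=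
  hF.comp (contDiff_const.prodMk (contDiff_const.prodMk contDiff_id))

lemma pd_eq_fderiv {F : ℝ → ℝ → ℝ → ℂ} (hF : ContDiff ℝ (⊤:ℕ∞) (U F)) :
    (U (pdx F) = fun p => fderiv ℝ (U F) p (1,0,0)) ∧
    (U (pdy F) = fun p => fderiv ℝ (U F) p (0,1,0)) ∧
    (U (pdz F) = fun p => fderiv ℝ (U F) p (0,0,1)) := by
  have hdiff : Differentiable ℝ (U F) := hF.differentiable (by simp)
  refine ⟨funext fun p => ?_, funext fun p => ?_, funext fun p => ?_⟩
  · have hL : HasDerivAt (fun x' => (x', p.2.1, p.2.2)) ((1:ℝ),(0:ℝ),(0:ℝ)) p.1 :=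
      (hasDerivAt_id p.1).prodMk ((hasDerivAt_const _ _).prodMk (hasDerivAt_const _ _))
    exact ((hdiff p).hasFDerivAt.comp_hasDerivAt p.1 hL).deriv
  · have hL : HasDerivAt (fun y' => (p.1, y', p.2.2)) ((0:ℝ),(1:ℝ),(0:ℝ)) p.2.1 :=
      (hasDerivAt_const _ _).prodMk ((hasDerivAt_id p.2.1).prodMk (hasDerivAt_const _ _))
    exact ((hdiff p).hasFDerivAt.comp_hasDerivAt p.2.1 hL).deriv
  · have hL : HasDerivAt (fun z' => (p.1, p.2.1, z')) ((0:ℝ),(0:ℝ),(1:ℝ)) p.2.2 :=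
      (hasDerivAt_const _ _).prodMk ((hasDerivAt_const _ _).prodMk (hasDerivAt_id p.2.2))
    exact ((hdiff p).hasFDerivAt.comp_hasDerivAt p.2.2 hL).deriv

lemma pdx_smooth {F : ℝ → ℝ → ℝ → ℂ} (hF : ContDiff ℝ (⊤:ℕ∞) (U F)) :
    ContDiff ℝ (⊤:ℕ∞) (U (pdx F)) := by
  rw [(pd_eq_fderiv hF).1]
  exact (hF.fderiv_right hle2).clm_apply contDiff_const

lemma pdy_smooth {F : ℝ → ℝ → ℝ → ℂ} (hF : ContDiff ℝ (⊤:ℕ∞) (U F)) :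
    ContDiff ℝ (⊤:ℕ∞) (U (pdy F)) := by
  rw [(pd_eq_fderiv hF).2.1]
  exact (hF.fderiv_right hle2).clm_apply contDiff_const

lemma pdz_smooth {F : ℝ → ℝ → ℝ → ℂ} (hF : ContDiff ℝ (⊤:ℕ∞) (U F)) :
    ContDiff ℝ (⊤:ℕ∞) (U (pdz F)) := by
  rw [(pd_eq_fderiv hF).2.2]
  exact (hF.fderiv_right hle2).clm_apply contDiff_const


section Nice
variable {S : ℝ → ℝ → ℝ} {K : ℝ}

local notation "Z01" => Set.Ioc (0:ℝ) 1


lemma K_nonneg (hK : ∀ y z, |S y z| ≤ K / (1 + y^2)) : 0 ≤ K := by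
  have h := (abs_nonneg (S 0 0)).trans (hK 0 0)
  simpa using h

lemma bound_int : Integrable (fun y : ℝ => K / (1 + y^2)) := by
  simpa [div_eq_mul_inv] using
    (integrable_inv_one_add_sq.const_mul K)

lemma N1 (hc : Continuous (fun p : ℝ × ℝ => S p.1 p.2)) (y : ℝ) : IntegrableOn (fun z => S y z) Z01 := by
  have : Continuous (fun z => S y z) := hc.comp (continuous_const.prodMk continuous_id)
  exact this.integrableOn_Ioc

lemma N2 (hc : Continuous (fun p : ℝ × ℝ => S p.1 p.2)) (hK : ∀ (y z : ℝ), |S y z| ≤ K / (1 + y^2)) (z : ℝ) : Integrable (fun y => S y z) := by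
  have hcont : Continuous (fun y => S y z) := hc.comp (continuous_id.prodMk continuous_const)
  exact (bound_int (K := K)).mono' hcont.aestronglyMeasurable
    (Filter.Eventually.of_forall fun y => by
      simpa [Real.norm_eq_abs] using hK y z)

lemma vol01 : (volume Z01).toReal = 1 := by simp [Real.volume_Ioc]

lemma inner_bound (hK : ∀ (y z : ℝ), |S y z| ≤ K / (1 + y^2)) (y : ℝ) : |∫ z in Z01, S y z| ≤ K / (1 + y^2) := by
  have h := norm_integral_le_of_norm_le_const (μ := volume.restrict Z01)
    (f := fun z => S y z) (C := K / (1 + y^2))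
    (Filter.Eventually.of_forall fun z => by simpa [Real.norm_eq_abs] using hK y z)
  rw [measureReal_restrict_apply_univ, measureReal_def, vol01] at h
  simpa [Real.norm_eq_abs] using h

lemma asm_int_z (hc : Continuous (fun p : ℝ × ℝ => S p.1 p.2)) : AEStronglyMeasurable (fun y => ∫ z in Z01, S y z) volume := by
  exact (hc.aestronglyMeasurable
    (μ := volume.prod (volume.restrict Z01))).integral_prod_right'

lemma N3 (hc : Continuous (fun p : ℝ × ℝ => S p.1 p.2)) (hK : ∀ (y z : ℝ), |S y z| ≤ K / (1 + y^2)) : Integrable (fun y => ∫ z in Z01, S y z) := by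
  exact (bound_int (K := K)).mono' (asm_int_z hc)
    (Filter.Eventually.of_forall fun y => by
      simpa [Real.norm_eq_abs] using inner_bound hK y)

lemma N4 (hc : Continuous (fun p : ℝ × ℝ => S p.1 p.2)) (hK : ∀ (y z : ℝ), |S y z| ≤ K / (1 + y^2)) : IntegrableOn (fun z => ∫ y, S y z) Z01 := by
  have hasm : AEStronglyMeasurable (fun z => ∫ y, S y z) (volume.restrict Z01) := by
    have hc' : Continuous (fun p : ℝ × ℝ => S p.2 p.1) :=
      hc.comp (continuous_snd.prodMk continuous_fst)
    exact (hc'.aestronglyMeasurable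
      (μ := (volume.restrict Z01).prod volume)).integral_prod_right'
  have hbd : ∀ z : ℝ, ‖∫ y, S y z‖ ≤ K * Real.pi := by
    intro z
    calc ‖∫ y, S y z‖ ≤ ∫ y, ‖S y z‖ := norm_integral_le_integral_norm _
      _ ≤ ∫ y, K / (1 + y^2) := by
          apply integral_mono (N2 hc hK z).norm (bound_int (K := K))
          intro y; simpa [Real.norm_eq_abs] using hK y z
      _ = K * Real.pi := by
          rw [show (fun y : ℝ => K / (1 + y^2)) = fun y : ℝ => K * (1 + y^2)⁻¹ by
            funext y; rw [div_eq_mul_inv]]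
          rw [integral_const_mul, integral_univ_inv_one_add_sq]
  apply Integrable.mono' (g := fun _ : ℝ => K * Real.pi)
    (integrableOn_const (by simp [Real.volume_Ioc])) hasm
  exact Filter.Eventually.of_forall fun z => hbd z

lemma Nswap (hc : Continuous (fun p : ℝ × ℝ => S p.1 p.2)) (hK : ∀ (y z : ℝ), |S y z| ≤ K / (1 + y^2)) : ∫ z in Z01, ∫ y, S y z = ∫ y, ∫ z in Z01, S y z := by
  have hint : Integrable (Function.uncurry S) (volume.prod (volume.restrict Z01)) := by
    have huncurry : Function.uncurry S = fun p : ℝ × ℝ => S p.1 p.2 := rfl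
    rw [huncurry, integrable_prod_iff (hc.aestronglyMeasurable)]
    constructor
    · exact Filter.Eventually.of_forall fun y => N1 hc y
    · exact (bound_int (K := K)).mono' ((hc.norm.aestronglyMeasurable
        (μ := volume.prod (volume.restrict Z01))).integral_prod_right')
        (Filter.Eventually.of_forall fun y => by
          have h1 : ∫ z in Z01, ‖S y z‖ ≤ K / (1+y^2) := by
            have := norm_integral_le_of_norm_le_const (μ := volume.restrict Z01)
              (f := fun z => ‖S y z‖) (C := K / (1 + y^2))
              (Filter.Eventually.of_forall fun z => by
                simpa [Real.norm_eq_abs] using hK y z)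
            rw [measureReal_restrict_apply_univ, measureReal_def, vol01] at this
            calc ∫ z in Z01, ‖S y z‖ ≤ |∫ z in Z01, ‖S y z‖| := le_abs_self _
              _ ≤ K / (1+y^2) := by simpa [Real.norm_eq_abs] using this
          have h2 : (0:ℝ) ≤ ∫ z in Z01, ‖S y z‖ :=
            integral_nonneg fun z => norm_nonneg _
          rw [Real.norm_eq_abs, abs_of_nonneg h2]
          exact h1)
  exact (integral_integral_swap hint).symm

end Nice


lemma decay_sq (f : ℝ → ℝ → ℝ → ℂ) (hf : GoodFn f) (α : ℕ × ℕ × ℕ) :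
    ∃ K : ℝ, ∀ x y z, ‖pderiv3 α f x y z‖^2 ≤ K/(1+y^2) := by
  obtain ⟨C₀, h₀⟩ := hf.decay α 0
  obtain ⟨C₁, h₁⟩ := hf.decay α 1
  refine ⟨C₀^2 + C₁^2, fun x y z => ?_⟩
  have e₀ := h₀ x y z; have e₁ := h₁ x y z
  rw [le_div_iff₀ (by positivity)]
  have hn := norm_nonneg (pderiv3 α f x y z)
  simp only [pow_zero, mul_one, pow_one] at e₀ e₁
  have hC₁0 : 0 ≤ C₁ := le_trans (mul_nonneg hn (abs_nonneg y)) e₁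
  nlinarith [mul_self_le_mul_self hn e₀,
    mul_self_le_mul_self (mul_nonneg hn (abs_nonneg y)) e₁, sq_abs y]

lemma xconst {F : ℝ → ℝ → ℝ → ℂ} (hUF : ContDiff ℝ (⊤:ℕ∞) (U F))
    (hx : ∀ x y z, pdx F x y z = 0) : ∀ x y z, F x y z = F 0 y z := by
  intro x y z
  exact is_const_of_deriv_eq_zero ((sect_x hUF y z).differentiable (by simp))
    (fun t => hx t y z) x 0

lemma xconst_pdy {F : ℝ → ℝ → ℝ → ℂ} (h : ∀ x y z, F x y z = F 0 y z) :
    ∀ x y z, pdy F x y z = pdy F 0 y z := by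
  intro x y z; unfold pdy; congr 1; funext y'; exact h x y' z

lemma xconst_pdz {F : ℝ → ℝ → ℝ → ℂ} (h : ∀ x y z, F x y z = F 0 y z) :
    ∀ x y z, pdz F x y z = pdz F 0 y z := by
  intro x y z; unfold pdz; congr 1; funext z'; exact h x y z'

lemma L2sq_eq (F : ℝ → ℝ → ℝ → ℂ) (hxc : ∀ x y z, F x y z = F 0 y z) :
    L2sq F = ∫ y : ℝ, ∫ z in Set.Ioc (0:ℝ) 1, ‖F 0 y z‖^2 := by
  have h1 : L2sq F = ∫ _x in Set.Ioc (0:ℝ) 1, ∫ y : ℝ, ∫ z in Set.Ioc (0:ℝ) 1, ‖F 0 y z‖^2 := by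
    unfold L2sq; simp only [hxc]
  rw [h1, setIntegral_const]
  simp [Real.volume_Ioc]

lemma L2sq_nonneg (F : ℝ → ℝ → ℝ → ℂ) : 0 ≤ L2sq F := by
  unfold L2sq
  apply integral_nonneg; intro x
  apply integral_nonneg; intro y
  apply integral_nonneg; intro z
  positivity

lemma HNsq_one (g : ℝ → ℝ → ℝ → ℂ) : HNsq 1 g
    = L2sq (pderiv3 (0,0,0) g) + L2sq (pderiv3 (1,0,0) g)
      + L2sq (pderiv3 (0,1,0) g) + L2sq (pderiv3 (0,0,1) g) := by
  have h : multiIndicesLe 1 = {(0,0,0),(1,0,0),(0,1,0),(0,0,1)} := by decide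
  rw [HNsq, h]
  rw [Finset.sum_insert (by decide), Finset.sum_insert (by decide),
    Finset.sum_insert (by decide), Finset.sum_singleton]
  ring

lemma HNsq_lower (g : ℝ → ℝ → ℝ → ℂ) : L2sq g + L2sq (pdy g) ≤ HNsq 1 g := by
  rw [HNsq_one]
  have h00 : pderiv3 (0,0,0) g = g := rfl
  have h010 : pderiv3 (0,1,0) g = pdy g := rfl
  rw [h00, h010]
  have := L2sq_nonneg (pderiv3 (1,0,0) g)
  have := L2sq_nonneg (pderiv3 (0,0,1) g)
  linarith

lemma HNsq_nonneg (g : ℝ → ℝ → ℝ → ℂ) : 0 ≤ HNsq 1 g := by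
  have h := HNsq_lower g
  have := L2sq_nonneg g
  have := L2sq_nonneg (pdy g)
  linarith

lemma HN_sq (g : ℝ → ℝ → ℝ → ℂ) : (HN 1 g)^2 = HNsq 1 g :=
  Real.sq_sqrt (HNsq_nonneg g)

lemma L2norm_sq (g : ℝ → ℝ → ℝ → ℂ) : (L2norm g)^2 = L2sq g :=
  Real.sq_sqrt (L2sq_nonneg g)

lemma sq_cont {F : ℝ → ℝ → ℝ → ℂ} (hUF : ContDiff ℝ (⊤:ℕ∞) (U F)) :
    Continuous fun p : ℝ × ℝ => ‖F 0 p.1 p.2‖^2 := by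
  have h : Continuous fun p : ℝ × ℝ => F 0 p.1 p.2 :=
    hUF.continuous.comp (continuous_const.prodMk (continuous_fst.prodMk continuous_snd))
  exact h.norm.pow 2

lemma coreA (F : ℝ → ℝ → ℝ → ℂ) (hUF : ContDiff ℝ (⊤:ℕ∞) (U F))
    (hper : ∀ x y z, F x y (z+1) = F x y z) (hxc : ∀ x y z, F x y z = F 0 y z) :
    ∀ x y z, ‖F x y z‖^2 ≤ 2 * ∫ ζ in Set.Ioc (0:ℝ) 1, (‖F 0 y ζ‖^2 + ‖pdz F 0 y ζ‖^2) := by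
  intro x y z
  rw [hxc]
  exact coreZ (fun ζ => F 0 y ζ) (sect_z hUF 0 y) (fun t => hper 0 y t) z

lemma coreB (F : ℝ → ℝ → ℝ → ℂ) (hUF : ContDiff ℝ (⊤:ℕ∞) (U F))
    (KF KdF C₁ : ℝ)
    (hKF : ∀ x y z, ‖F x y z‖^2 ≤ KF/(1+y^2))
    (hKdF : ∀ x y z, ‖pdy F x y z‖^2 ≤ KdF/(1+y^2))
    (hC₁ : ∀ x y z, ‖F x y z‖ * |y| ≤ C₁)
    (hxcF : ∀ x y z, F x y z = F 0 y z)
    (hxcdF : ∀ x y z, pdy F x y z = pdy F 0 y z) :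
    ∀ y₀ : ℝ, (∫ z in Set.Ioc (0:ℝ) 1, ‖F 0 y₀ z‖^2) ≤ L2sq F + L2sq (pdy F) := by
  intro y₀
  have hUdF : ContDiff ℝ (⊤:ℕ∞) (U (pdy F)) := pdy_smooth hUF
  have hcS : Continuous fun p : ℝ × ℝ => ‖F 0 p.1 p.2‖^2 := sq_cont hUF
  have hcD : Continuous fun p : ℝ × ℝ => ‖pdy F 0 p.1 p.2‖^2 := sq_cont hUdF
  have habsS : ∀ (y z : ℝ), |‖F 0 y z‖^2| ≤ KF/(1+y^2) := fun y z => by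
    rw [abs_of_nonneg (by positivity)]; exact hKF 0 y z
  have habsD : ∀ (y z : ℝ), |‖pdy F 0 y z‖^2| ≤ KdF/(1+y^2) := fun y z => by
    rw [abs_of_nonneg (by positivity)]; exact hKdF 0 y z
  have hiS : ∀ ζ, Integrable (fun t : ℝ => ‖F 0 t ζ‖^2) :=
    fun ζ => N2 (S := fun y z => ‖F 0 y z‖^2) hcS habsS ζ
  have hiD : ∀ ζ, Integrable (fun t : ℝ => ‖pdy F 0 t ζ‖^2) :=
    fun ζ => N2 (S := fun y z => ‖pdy F 0 y z‖^2) hcD habsD ζ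
  have hpt : ∀ ζ y : ℝ, ‖F 0 y ζ‖^2 ≤ (∫ η : ℝ, ‖F 0 η ζ‖^2) + ∫ η : ℝ, ‖pdy F 0 η ζ‖^2 := by
    intro ζ y
    have hint : Integrable (fun t : ℝ => ‖F 0 t ζ‖^2 + ‖pdy F 0 t ζ‖^2) :=
      (hiS ζ).add (hiD ζ)
    have h : ‖F 0 y ζ‖^2 ≤ ∫ t : ℝ, (‖F 0 t ζ‖^2 + ‖pdy F 0 t ζ‖^2) :=
      coreY (fun η => F 0 η ζ) (sect_y hUF 0 ζ) C₁ (fun t => hC₁ 0 t ζ) hint y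
    have h2 : (∫ t : ℝ, (‖F 0 t ζ‖^2 + ‖pdy F 0 t ζ‖^2))
        = (∫ η : ℝ, ‖F 0 η ζ‖^2) + ∫ η : ℝ, ‖pdy F 0 η ζ‖^2 := integral_add (hiS ζ) (hiD ζ)
    linarith [h, h2.le, h2.ge]
  have hN4S := N4 (S := fun y z => ‖F 0 y z‖^2) hcS habsS
  have hN4D := N4 (S := fun y z => ‖pdy F 0 y z‖^2) hcD habsD
  have hmono : (∫ z in Set.Ioc (0:ℝ) 1, ‖F 0 y₀ z‖^2)
      ≤ ∫ ζ in Set.Ioc (0:ℝ) 1, ((∫ η : ℝ, ‖F 0 η ζ‖^2) + ∫ η : ℝ, ‖pdy F 0 η ζ‖^2) := by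
    apply integral_mono_of_nonneg (Filter.Eventually.of_forall fun z => by positivity)
      (hN4S.add hN4D) (Filter.Eventually.of_forall fun ζ => hpt ζ y₀)
  have hsplit : (∫ ζ in Set.Ioc (0:ℝ) 1, ((∫ η : ℝ, ‖F 0 η ζ‖^2) + ∫ η : ℝ, ‖pdy F 0 η ζ‖^2))
      = (∫ ζ in Set.Ioc (0:ℝ) 1, ∫ η : ℝ, ‖F 0 η ζ‖^2)
        + ∫ ζ in Set.Ioc (0:ℝ) 1, ∫ η : ℝ, ‖pdy F 0 η ζ‖^2 := integral_add hN4S hN4D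
  have hswap1 := Nswap (S := fun y z => ‖F 0 y z‖^2) hcS habsS
  have hswap2 := Nswap (S := fun y z => ‖pdy F 0 y z‖^2) hcD habsD
  have hcol1 := L2sq_eq F hxcF
  have hcol2 := L2sq_eq (pdy F) hxcdF
  calc (∫ z in Set.Ioc (0:ℝ) 1, ‖F 0 y₀ z‖^2) ≤ _ := hmono
    _ = (∫ η : ℝ, ∫ ζ in Set.Ioc (0:ℝ) 1, ‖F 0 η ζ‖^2)
        + (∫ η : ℝ, ∫ ζ in Set.Ioc (0:ℝ) 1, ‖pdy F 0 η ζ‖^2) := by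
        rw [hsplit, hswap1, hswap2]
    _ = L2sq F + L2sq (pdy F) := by rw [← hcol1, ← hcol2]

/-- Anisotropic estimates for `x`-independent functions: if `∂_x f₁ = ∂_x f₂ = 0`, then
(i) `‖f₁‖_{L^∞} ≤ C(‖f₁‖_{H¹} + ‖∂_z f₁‖_{H¹})`;
(ii) `‖f₁ f₂‖_{L²} ≤ C(‖f₁‖_{H¹} + ‖∂_z f₁‖_{H¹})‖f₂‖_{L²}`;
(iii) `‖f₁ f₂‖_{L²} ≤ C(‖f₁‖_{L²} + ‖∂_z f₁‖_{L²})‖f₂‖_{H¹}`. -/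
theorem stmt13 : ∃ C : ℝ, 0 < C ∧ ∀ f₁ f₂ : ℝ → ℝ → ℝ → ℂ,
    GoodFn f₁ → GoodFn f₂ →
    (∀ x y z, pdx f₁ x y z = 0) → (∀ x y z, pdx f₂ x y z = 0) →
    (∀ x y z, ‖f₁ x y z‖ ≤ C * (HN 1 f₁ + HN 1 (pdz f₁))) ∧
    L2norm (fun x y z => f₁ x y z * f₂ x y z)
      ≤ C * (HN 1 f₁ + HN 1 (pdz f₁)) * L2norm f₂ ∧
    L2norm (fun x y z => f₁ x y z * f₂ x y z)
      ≤ C * (L2norm f₁ + L2norm (pdz f₁)) * HN 1 f₂ := by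
  refine ⟨2, by norm_num, ?_⟩
  intro f₁ f₂ hf₁ hf₂ hx₁ hx₂
  -- smoothness
  have hU1 : ContDiff ℝ (⊤:ℕ∞) (U f₁) := hf₁.smooth
  have hU3 : ContDiff ℝ (⊤:ℕ∞) (U (pdz f₁)) := pdz_smooth hU1
  have hV1 : ContDiff ℝ (⊤:ℕ∞) (U f₂) := hf₂.smooth
  -- x-constancy
  have hxc1 : ∀ x y z, f₁ x y z = f₁ 0 y z := xconst hU1 hx₁
  have hxc2 : ∀ x y z, pdy f₁ x y z = pdy f₁ 0 y z := xconst_pdy hxc1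
  have hxc3 : ∀ x y z, pdz f₁ x y z = pdz f₁ 0 y z := xconst_pdz hxc1
  have hxc4 : ∀ x y z, pdy (pdz f₁) x y z = pdy (pdz f₁) 0 y z := xconst_pdy hxc3
  have hyc1 : ∀ x y z, f₂ x y z = f₂ 0 y z := xconst hV1 hx₂
  have hyc2 : ∀ x y z, pdy f₂ x y z = pdy f₂ 0 y z := xconst_pdy hyc1
  -- quadratic decay bounds
  obtain ⟨K1, hK1⟩ := decay_sq f₁ hf₁ (0,0,0)
  have hK1' : ∀ x y z, ‖f₁ x y z‖^2 ≤ K1/(1+y^2) := hK1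
  obtain ⟨K2, hK2⟩ := decay_sq f₁ hf₁ (0,1,0)
  have hK2' : ∀ x y z, ‖pdy f₁ x y z‖^2 ≤ K2/(1+y^2) := hK2
  obtain ⟨K3, hK3⟩ := decay_sq f₁ hf₁ (0,0,1)
  have hK3' : ∀ x y z, ‖pdz f₁ x y z‖^2 ≤ K3/(1+y^2) := hK3
  obtain ⟨K4, hK4⟩ := decay_sq f₁ hf₁ (0,1,1)
  have hK4' : ∀ x y z, ‖pdy (pdz f₁) x y z‖^2 ≤ K4/(1+y^2) := hK4
  obtain ⟨Ka, hKa⟩ := decay_sq f₂ hf₂ (0,0,0)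
  have hKa' : ∀ x y z, ‖f₂ x y z‖^2 ≤ Ka/(1+y^2) := hKa
  obtain ⟨Kb, hKb⟩ := decay_sq f₂ hf₂ (0,1,0)
  have hKb' : ∀ x y z, ‖pdy f₂ x y z‖^2 ≤ Kb/(1+y^2) := hKb
  -- linear decay bounds
  obtain ⟨Cl1, hCl1⟩ := hf₁.decay (0,0,0) 1
  have hCl1' : ∀ x y z, ‖f₁ x y z‖ * |y| ≤ Cl1 := by
    intro x y z; have := hCl1 x y z; simpa [pderiv3] using this
  obtain ⟨Cl3, hCl3⟩ := hf₁.decay (0,0,1) 1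
  have hCl3' : ∀ x y z, ‖pdz f₁ x y z‖ * |y| ≤ Cl3 := by
    intro x y z; have := hCl3 x y z; simpa [pderiv3] using this
  obtain ⟨Cla, hCla⟩ := hf₂.decay (0,0,0) 1
  have hCla' : ∀ x y z, ‖f₂ x y z‖ * |y| ≤ Cla := by
    intro x y z; have := hCla x y z; simpa [pderiv3] using this
  -- coreB bounds
  have hB1 : ∀ y : ℝ, (∫ z in Set.Ioc (0:ℝ) 1, ‖f₁ 0 y z‖^2) ≤ L2sq f₁ + L2sq (pdy f₁) :=
    coreB f₁ hU1 K1 K2 Cl1 hK1' hK2' hCl1' hxc1 hxc2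
  have hB3 : ∀ y : ℝ, (∫ z in Set.Ioc (0:ℝ) 1, ‖pdz f₁ 0 y z‖^2)
      ≤ L2sq (pdz f₁) + L2sq (pdy (pdz f₁)) :=
    coreB (pdz f₁) hU3 K3 K4 Cl3 hK3' hK4' hCl3' hxc3 hxc4
  have hB5 : ∀ y : ℝ, (∫ z in Set.Ioc (0:ℝ) 1, ‖f₂ 0 y z‖^2) ≤ L2sq f₂ + L2sq (pdy f₂) :=
    coreB f₂ hV1 Ka Kb Cla hKa' hKb' hCla' hyc1 hyc2
  -- continuity of squares
  have hc1 : Continuous fun p : ℝ × ℝ => ‖f₁ 0 p.1 p.2‖^2 := sq_cont hU1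
  have hc3 : Continuous fun p : ℝ × ℝ => ‖pdz f₁ 0 p.1 p.2‖^2 := sq_cont hU3
  have hcG : Continuous fun p : ℝ × ℝ => ‖f₂ 0 p.1 p.2‖^2 := sq_cont hV1
  have habs1 : ∀ (y z : ℝ), |‖f₁ 0 y z‖^2| ≤ K1/(1+y^2) := fun y z => by
    rw [abs_of_nonneg (by positivity)]; exact hK1' 0 y z
  have habs3 : ∀ (y z : ℝ), |‖pdz f₁ 0 y z‖^2| ≤ K3/(1+y^2) := fun y z => by
    rw [abs_of_nonneg (by positivity)]; exact hK3' 0 y z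
  have habsG : ∀ (y z : ℝ), |‖f₂ 0 y z‖^2| ≤ Ka/(1+y^2) := fun y z => by
    rw [abs_of_nonneg (by positivity)]; exact hKa' 0 y z
  -- the function A
  set A : ℝ → ℝ := fun y => 2 * ∫ ζ in Set.Ioc (0:ℝ) 1, (‖f₁ 0 y ζ‖^2 + ‖pdz f₁ 0 y ζ‖^2)
    with hA
  have hA_pt : ∀ x y z, ‖f₁ x y z‖^2 ≤ A y := fun x y z =>
    coreA f₁ hU1 hf₁.per_z hxc1 x y z
  have hA_nonneg : ∀ y, 0 ≤ A y := fun y =>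
    mul_nonneg (by norm_num) (integral_nonneg fun z => by positivity)
  have hN1sum : ∀ y : ℝ, IntegrableOn (fun z => ‖f₁ 0 y z‖^2 + ‖pdz f₁ 0 y z‖^2)
      (Set.Ioc (0:ℝ) 1) := fun y =>
    (N1 (S := fun y z => ‖f₁ 0 y z‖^2) hc1 y).add
      (N1 (S := fun y z => ‖pdz f₁ 0 y z‖^2) hc3 y)
  have hAsplit : ∀ y : ℝ, A y = 2 * ((∫ ζ in Set.Ioc (0:ℝ) 1, ‖f₁ 0 y ζ‖^2)
      + ∫ ζ in Set.Ioc (0:ℝ) 1, ‖pdz f₁ 0 y ζ‖^2) := by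
    intro y
    simp only [hA]
    rw [integral_add (N1 (S := fun y z => ‖f₁ 0 y z‖^2) hc1 y)
      (N1 (S := fun y z => ‖pdz f₁ 0 y z‖^2) hc3 y)]
  have hA_le : ∀ y, A y ≤ 2*((L2sq f₁ + L2sq (pdy f₁)) + (L2sq (pdz f₁) + L2sq (pdy (pdz f₁)))) := by
    intro y
    rw [hAsplit y]
    have h1 := hB1 y; have h3 := hB3 y
    linarith
  -- (i) squared bound
  have hi_sq : ∀ x y z, ‖f₁ x y z‖^2 ≤ 2*((HN 1 f₁)^2 + (HN 1 (pdz f₁))^2) := by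
    intro x y z
    have h1 := hA_pt x y z
    have h2 := hA_le y
    have e1 : L2sq f₁ + L2sq (pdy f₁) ≤ (HN 1 f₁)^2 := by
      rw [HN_sq]; exact HNsq_lower f₁
    have e2 : L2sq (pdz f₁) + L2sq (pdy (pdz f₁)) ≤ (HN 1 (pdz f₁))^2 := by
      rw [HN_sq]; exact HNsq_lower (pdz f₁)
    linarith
  have hP₁0 : 0 ≤ HN 1 f₁ := Real.sqrt_nonneg _
  have hP₂0 : 0 ≤ HN 1 (pdz f₁) := Real.sqrt_nonneg _
  have hM0 : 0 ≤ 2 * (HN 1 f₁ + HN 1 (pdz f₁)) := by linarith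
  have hMsq : 2*((HN 1 f₁)^2 + (HN 1 (pdz f₁))^2) ≤ (2 * (HN 1 f₁ + HN 1 (pdz f₁)))^2 := by
    nlinarith [sq_nonneg (HN 1 f₁ - HN 1 (pdz f₁)), mul_nonneg hP₁0 hP₂0]
  have hpt : ∀ x y z, ‖f₁ x y z‖ ≤ 2 * (HN 1 f₁ + HN 1 (pdz f₁)) := by
    intro x y z
    have h := (hi_sq x y z).trans hMsq
    calc ‖f₁ x y z‖ = Real.sqrt (‖f₁ x y z‖^2) := (Real.sqrt_sq (norm_nonneg _)).symm
      _ ≤ Real.sqrt ((2 * (HN 1 f₁ + HN 1 (pdz f₁)))^2) := Real.sqrt_le_sqrt h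
      _ = 2 * (HN 1 f₁ + HN 1 (pdz f₁)) := Real.sqrt_sq hM0
  refine ⟨hpt, ?_, ?_⟩
  -- collapse of product L2sq
  · have hcolm : L2sq (fun x y z => f₁ x y z * f₂ x y z)
        = ∫ y : ℝ, ∫ z in Set.Ioc (0:ℝ) 1, ‖f₁ 0 y z‖^2 * ‖f₂ 0 y z‖^2 := by
      have h := L2sq_eq (fun x y z => f₁ x y z * f₂ x y z)
        (fun x y z => by
          show f₁ x y z * f₂ x y z = f₁ 0 y z * f₂ 0 y z
          rw [hxc1 x y z, hyc1 x y z])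
      simpa [norm_mul, mul_pow] using h
    have hcol2 := L2sq_eq f₂ hyc1
    set M2 : ℝ := 2*((HN 1 f₁)^2 + (HN 1 (pdz f₁))^2) with hM2
    have hM2nn : 0 ≤ M2 := by positivity
    have hii : L2sq (fun x y z => f₁ x y z * f₂ x y z) ≤ M2 * L2sq f₂ := by
      rw [hcolm, hcol2, ← integral_const_mul]
      apply integral_mono_of_nonneg
      · exact Filter.Eventually.of_forall fun y => integral_nonneg fun z => by positivity
      · exact ((N3 (S := fun y z => ‖f₂ 0 y z‖^2) hcG habsG).const_mul M2)
      · refine Filter.Eventually.of_forall fun y => ?_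
        calc (∫ z in Set.Ioc (0:ℝ) 1, ‖f₁ 0 y z‖^2 * ‖f₂ 0 y z‖^2)
            ≤ ∫ z in Set.Ioc (0:ℝ) 1, M2 * ‖f₂ 0 y z‖^2 := by
              apply integral_mono_of_nonneg
                (Filter.Eventually.of_forall fun z => by positivity)
                ((N1 (S := fun y z => ‖f₂ 0 y z‖^2) hcG y).const_mul M2)
                (Filter.Eventually.of_forall fun z =>
                  mul_le_mul_of_nonneg_right (hi_sq 0 y z) (by positivity))
          _ = M2 * ∫ z in Set.Ioc (0:ℝ) 1, ‖f₂ 0 y z‖^2 := integral_const_mul _ _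
    have hL2f₂nn := L2sq_nonneg f₂
    calc L2norm (fun x y z => f₁ x y z * f₂ x y z)
        = Real.sqrt (L2sq (fun x y z => f₁ x y z * f₂ x y z)) := rfl
      _ ≤ Real.sqrt ((2 * (HN 1 f₁ + HN 1 (pdz f₁)))^2 * L2sq f₂) := by
          apply Real.sqrt_le_sqrt
          calc L2sq (fun x y z => f₁ x y z * f₂ x y z) ≤ M2 * L2sq f₂ := hii
            _ ≤ (2 * (HN 1 f₁ + HN 1 (pdz f₁)))^2 * L2sq f₂ :=
                mul_le_mul_of_nonneg_right hMsq hL2f₂nn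
      _ = 2 * (HN 1 f₁ + HN 1 (pdz f₁)) * Real.sqrt (L2sq f₂) := by
          rw [Real.sqrt_mul (sq_nonneg _), Real.sqrt_sq hM0]
      _ = 2 * (HN 1 f₁ + HN 1 (pdz f₁)) * L2norm f₂ := rfl
  -- part (iii)
  · have hcolm : L2sq (fun x y z => f₁ x y z * f₂ x y z)
        = ∫ y : ℝ, ∫ z in Set.Ioc (0:ℝ) 1, ‖f₁ 0 y z‖^2 * ‖f₂ 0 y z‖^2 := by
      have h := L2sq_eq (fun x y z => f₁ x y z * f₂ x y z)
        (fun x y z => by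
          show f₁ x y z * f₂ x y z = f₁ 0 y z * f₂ 0 y z
          rw [hxc1 x y z, hyc1 x y z])
      simpa [norm_mul, mul_pow] using h
    set Jb : ℝ := L2sq f₂ + L2sq (pdy f₂) with hJb
    have hJb0 : 0 ≤ Jb := add_nonneg (L2sq_nonneg _) (L2sq_nonneg _)
    have hJb_q : Jb ≤ (HN 1 f₂)^2 := by rw [HN_sq]; exact HNsq_lower f₂
    -- integrability of A
    have hAint : Integrable A := by
      have h := (N3 (S := fun y z => ‖f₁ 0 y z‖^2 + ‖pdz f₁ 0 y z‖^2) (K := K1 + K3)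
        (hc1.add hc3)
        (fun y z => by
          rw [abs_of_nonneg (by positivity), add_div]
          exact add_le_add (hK1' 0 y z) (hK3' 0 y z)))
      exact h.const_mul 2
    have hintA : ∫ y : ℝ, A y = 2*(L2sq f₁ + L2sq (pdz f₁)) := by
      have h1 : ∫ y : ℝ, A y
          = 2 * ∫ y : ℝ, ∫ ζ in Set.Ioc (0:ℝ) 1, (‖f₁ 0 y ζ‖^2 + ‖pdz f₁ 0 y ζ‖^2) :=
        integral_const_mul 2 _
      rw [h1]
      have h2 : ∀ y : ℝ, (∫ ζ in Set.Ioc (0:ℝ) 1, (‖f₁ 0 y ζ‖^2 + ‖pdz f₁ 0 y ζ‖^2))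
          = (∫ ζ in Set.Ioc (0:ℝ) 1, ‖f₁ 0 y ζ‖^2)
            + ∫ ζ in Set.Ioc (0:ℝ) 1, ‖pdz f₁ 0 y ζ‖^2 := fun y =>
        integral_add (N1 (S := fun y z => ‖f₁ 0 y z‖^2) hc1 y)
          (N1 (S := fun y z => ‖pdz f₁ 0 y z‖^2) hc3 y)
      simp only [h2]
      rw [integral_add (N3 (S := fun y z => ‖f₁ 0 y z‖^2) hc1 habs1)
        (N3 (S := fun y z => ‖pdz f₁ 0 y z‖^2) hc3 habs3),
        ← L2sq_eq f₁ hxc1, ← L2sq_eq (pdz f₁) hxc3]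
    have hiii : L2sq (fun x y z => f₁ x y z * f₂ x y z) ≤ (∫ y : ℝ, A y) * Jb := by
      rw [hcolm, ← integral_mul_const]
      apply integral_mono_of_nonneg
      · exact Filter.Eventually.of_forall fun y => integral_nonneg fun z => by positivity
      · exact hAint.mul_const Jb
      · refine Filter.Eventually.of_forall fun y => ?_
        calc (∫ z in Set.Ioc (0:ℝ) 1, ‖f₁ 0 y z‖^2 * ‖f₂ 0 y z‖^2)
            ≤ ∫ z in Set.Ioc (0:ℝ) 1, A y * ‖f₂ 0 y z‖^2 := by
              apply integral_mono_of_nonneg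
                (Filter.Eventually.of_forall fun z => by positivity)
                ((N1 (S := fun y z => ‖f₂ 0 y z‖^2) hcG y).const_mul (A y))
                (Filter.Eventually.of_forall fun z =>
                  mul_le_mul_of_nonneg_right (hA_pt 0 y z) (by positivity))
          _ = A y * ∫ z in Set.Ioc (0:ℝ) 1, ‖f₂ 0 y z‖^2 := integral_const_mul _ _
          _ ≤ A y * Jb := mul_le_mul_of_nonneg_left (hB5 y) (hA_nonneg y)
    have ha2 : (L2norm f₁)^2 = L2sq f₁ := L2norm_sq f₁
    have hb2 : (L2norm (pdz f₁))^2 = L2sq (pdz f₁) := L2norm_sq (pdz f₁)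
    have ha0 : 0 ≤ L2norm f₁ := Real.sqrt_nonneg _
    have hb0 : 0 ≤ L2norm (pdz f₁) := Real.sqrt_nonneg _
    have hq0 : 0 ≤ HN 1 f₂ := Real.sqrt_nonneg _
    have hfinal : L2sq (fun x y z => f₁ x y z * f₂ x y z)
        ≤ (2 * (L2norm f₁ + L2norm (pdz f₁)) * HN 1 f₂)^2 := by
      have h1 : L2sq (fun x y z => f₁ x y z * f₂ x y z)
          ≤ 2*((L2norm f₁)^2 + (L2norm (pdz f₁))^2) * Jb := by
        rw [ha2, hb2]; rw [hintA] at hiii; exact hiii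
      have h2 : 2*((L2norm f₁)^2 + (L2norm (pdz f₁))^2) * Jb
          ≤ 2*((L2norm f₁)^2 + (L2norm (pdz f₁))^2) * (HN 1 f₂)^2 :=
        mul_le_mul_of_nonneg_left hJb_q (by positivity)
      have h3 : 2*((L2norm f₁)^2 + (L2norm (pdz f₁))^2) * (HN 1 f₂)^2
          ≤ (2 * (L2norm f₁ + L2norm (pdz f₁)) * HN 1 f₂)^2 := by
        nlinarith [sq_nonneg (L2norm f₁ - L2norm (pdz f₁)), mul_nonneg ha0 hb0,
          sq_nonneg (HN 1 f₂), mul_nonneg (mul_nonneg ha0 hb0) (sq_nonneg (HN 1 f₂))]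
      linarith
    have hRnn : 0 ≤ 2 * (L2norm f₁ + L2norm (pdz f₁)) * HN 1 f₂ := by positivity
    calc L2norm (fun x y z => f₁ x y z * f₂ x y z)
        = Real.sqrt (L2sq (fun x y z => f₁ x y z * f₂ x y z)) := rfl
      _ ≤ Real.sqrt ((2 * (L2norm f₁ + L2norm (pdz f₁)) * HN 1 f₂)^2) :=
          Real.sqrt_le_sqrt hfinal
      _ = 2 * (L2norm f₁ + L2norm (pdz f₁)) * HN 1 f₂ := Real.sqrt_sq hRnn

end
end

section
/- There exists a constant C > 0 with the following property. Let u = (u¹, u², u³) be a vector field whose components belong to the class below, which is divergence free (∂_x u¹ + ∂_y u² + ∂_z u³ = 0) and has vanishing x-average (∫₀¹ u(x,y,z) dx = 0 for all (y,z)). Then: (i) for every integer m ≥ 0, ( Σ_{|α|=m} Σ_{j=1}^{3} ( ‖∂^α ∂_x² u^j‖_{L²}² + ‖∂^α ∂_z ∂_x u^j‖_{L²}² ) )^{1/2} ≤ C [ ( Σ_{|α|=m} ‖∂^α (∂_x² + ∂_z²) u³‖_{L²}² )^{1/2} + ( Σ_{|α|=m} ‖∂^α Δ u²‖_{L²}²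 )^{1/2} ]; (ii) for every ν ∈ (0,1], ( Σ_{j=1}^{3} ‖Δ∂_x u^j‖_{L²}² )^{1/2} + ‖Δ∂_z u³‖_{L²} ≤ C ( ν^{−1/3} ‖∇(∂_x² + ∂_z²) u³‖_{L²} + ν^{1/3} ‖∇Δ u³‖_{L²} + ‖∇Δ u²‖_{L²} ), where ‖∇g‖_{L²}² = ‖∂_x g‖_{L²}² + ‖∂_y g‖_{L²}² + ‖∂_z g‖_{L²}². The constant C is independent of u, m, ν. -/
open MeasureTheory

noncomputable section

/-- The multi-indices `α ∈ ℕ³` of order `|α| = m`. -/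
def multiIndicesEq (m : ℕ) : Finset (ℕ × ℕ × ℕ) :=
  (Finset.range (m+1) ×ˢ Finset.range (m+1) ×ˢ Finset.range (m+1)).filter
    fun α => α.1 + α.2.1 + α.2.2 = m


abbrev E3 : Type := ℝ × ℝ × ℝ

def Fn3 (f : ℝ → ℝ → ℝ → ℂ) : E3 → ℂ := fun p => f p.1 p.2.1 p.2.2

def Sm (f : ℝ → ℝ → ℝ → ℂ) : Prop := ContDiff ℝ (⊤ : ℕ∞) (Fn3 f)

def e1 : E3 := (1,0,0)
def e2 : E3 := (0,1,0)
def e3 : E3 := (0,0,1)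

lemma hasDerivAt_slice1 {g : E3 → ℂ} (hg : Differentiable ℝ g) (x y z : ℝ) :
    HasDerivAt (fun x' => g (x', y, z)) (fderiv ℝ g (x,y,z) e1) x := by
  have h1 : HasDerivAt (fun x' : ℝ => ((x' : ℝ), (y, z))) ((1:ℝ),((0:ℝ),(0:ℝ))) x :=
    (hasDerivAt_id x).prodMk (hasDerivAt_const x (y,z))
  exact (hg (x,y,z)).hasFDerivAt.comp_hasDerivAt x h1

lemma hasDerivAt_slice2 {g : E3 → ℂ} (hg : Differentiable ℝ g) (x y z : ℝ) :
    HasDerivAt (fun y' => g (x, y', z)) (fderiv ℝ g (x,y,z) e2) y := by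
  have h1 : HasDerivAt (fun y' : ℝ => ((x : ℝ), ((y' : ℝ), z))) ((0:ℝ),((1:ℝ),(0:ℝ))) y :=
    (hasDerivAt_const y x).prodMk ((hasDerivAt_id y).prodMk (hasDerivAt_const y z))
  exact (hg (x,y,z)).hasFDerivAt.comp_hasDerivAt y h1

lemma hasDerivAt_slice3 {g : E3 → ℂ} (hg : Differentiable ℝ g) (x y z : ℝ) :
    HasDerivAt (fun z' => g (x, y, z')) (fderiv ℝ g (x,y,z) e3) z := by
  have h1 : HasDerivAt (fun z' : ℝ => ((x : ℝ), ((y : ℝ), (z' : ℝ)))) ((0:ℝ),((0:ℝ),(1:ℝ))) z :=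
    (hasDerivAt_const z x).prodMk ((hasDerivAt_const z y).prodMk (hasDerivAt_id z))
  exact (hg (x,y,z)).hasFDerivAt.comp_hasDerivAt z h1

lemma Fn3_pdx {f} (hf : Sm f) : Fn3 (pdx f) = fun p => fderiv ℝ (Fn3 f) p e1 := by
  funext p
  exact (hasDerivAt_slice1 (hf.differentiable (by norm_num)) p.1 p.2.1 p.2.2).deriv

lemma Fn3_pdy {f} (hf : Sm f) : Fn3 (pdy f) = fun p => fderiv ℝ (Fn3 f) p e2 := by
  funext p
  exact (hasDerivAt_slice2 (hf.differentiable (by norm_num)) p.1 p.2.1 p.2.2).deriv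

lemma Fn3_pdz {f} (hf : Sm f) : Fn3 (pdz f) = fun p => fderiv ℝ (Fn3 f) p e3 := by
  funext p
  exact (hasDerivAt_slice3 (hf.differentiable (by norm_num)) p.1 p.2.1 p.2.2).deriv

lemma Sm.fderiv_apply {g : E3 → ℂ} (hg : ContDiff ℝ (⊤:ℕ∞) g) (v : E3) :
    ContDiff ℝ (⊤:ℕ∞) (fun p => fderiv ℝ g p v) :=
  ((contDiff_infty_iff_fderiv.mp hg).2).clm_apply contDiff_const

lemma Sm.dx {f} (hf : Sm f) : Sm (pdx f) := by
  unfold Sm; rw [Fn3_pdx hf]; exact Sm.fderiv_apply hf e1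
lemma Sm.dy {f} (hf : Sm f) : Sm (pdy f) := by
  unfold Sm; rw [Fn3_pdy hf]; exact Sm.fderiv_apply hf e2
lemma Sm.dz {f} (hf : Sm f) : Sm (pdz f) := by
  unfold Sm; rw [Fn3_pdz hf]; exact Sm.fderiv_apply hf e3
section
variable {g : ℝ × ℝ × ℝ → ℂ}

lemma fderiv_fderiv_apply (hg : ContDiff ℝ (⊤:ℕ∞) g) (p v w : ℝ × ℝ × ℝ) :
    fderiv ℝ (fun q => fderiv ℝ g q v) p w = fderiv ℝ (fderiv ℝ g) p w v := by
  have hd : DifferentiableAt ℝ (fderiv ℝ g) p :=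
    ((contDiff_infty_iff_fderiv.mp hg).2).differentiable (by norm_num) p
  rw [fderiv_clm_apply hd (differentiableAt_const v)]
  simp

lemma snd_symm (hg : ContDiff ℝ (⊤:ℕ∞) g) (p v w : ℝ × ℝ × ℝ) :
    fderiv ℝ (fun q => fderiv ℝ g q v) p w = fderiv ℝ (fun q => fderiv ℝ g q w) p v := by
  rw [fderiv_fderiv_apply hg, fderiv_fderiv_apply hg]
  have h1 : ∀ q, HasFDerivAt g (fderiv ℝ g q) q := fun q =>
    ((hg.differentiable (by norm_num)) q).hasFDerivAt
  have h2 : HasFDerivAt (fderiv ℝ g) (fderiv ℝ (fderiv ℝ g) p) p :=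
    (((contDiff_infty_iff_fderiv.mp hg).2).differentiable (by norm_num) p).hasFDerivAt
  exact second_derivative_symmetric h1 h2 w v
end

section
variable {f g : ℝ → ℝ → ℝ → ℂ}

lemma Fn3_inj (h : Fn3 f = Fn3 g) : f = g := by
  funext x y z; exact congrFun h (x,y,z)

lemma pdx_pdy_comm (hf : Sm f) : pdx (pdy f) = pdy (pdx f) := by
  apply Fn3_inj
  rw [Fn3_pdx hf.dy, Fn3_pdy hf.dx, Fn3_pdy hf, Fn3_pdx hf]
  funext p
  exact snd_symm hf p e2 e1

lemma pdx_pdz_comm (hf : Sm f) : pdx (pdz f) = pdz (pdx f) := by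
  apply Fn3_inj
  rw [Fn3_pdx hf.dz, Fn3_pdz hf.dx, Fn3_pdz hf, Fn3_pdx hf]
  funext p
  exact snd_symm hf p e3 e1

lemma pdy_pdz_comm (hf : Sm f) : pdy (pdz f) = pdz (pdy f) := by
  apply Fn3_inj
  rw [Fn3_pdy hf.dz, Fn3_pdz hf.dy, Fn3_pdz hf, Fn3_pdy hf]
  funext p
  exact snd_symm hf p e3 e2

lemma Sm.dx_iter (hf : Sm f) (n : ℕ) : Sm (pdx^[n] f) := by
  induction n with
  | zero => exact hf
  | succ n ih => rw [Function.iterate_succ_apply']; exact ih.dx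

lemma Sm.dy_iter (hf : Sm f) (n : ℕ) : Sm (pdy^[n] f) := by
  induction n with
  | zero => exact hf
  | succ n ih => rw [Function.iterate_succ_apply']; exact ih.dy

lemma Sm.dz_iter (hf : Sm f) (n : ℕ) : Sm (pdz^[n] f) := by
  induction n with
  | zero => exact hf
  | succ n ih => rw [Function.iterate_succ_apply']; exact ih.dz

lemma pdx_pdy_iter_comm (hf : Sm f) (n : ℕ) : pdx (pdy^[n] f) = pdy^[n] (pdx f) := by
  induction n with
  | zero => rfl
  | succ n ih =>
    rw [Function.iterate_succ_apply', Function.iterate_succ_apply',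
      pdx_pdy_comm (hf.dy_iter n), ih]

lemma pdx_pdz_iter_comm (hf : Sm f) (n : ℕ) : pdx (pdz^[n] f) = pdz^[n] (pdx f) := by
  induction n with
  | zero => rfl
  | succ n ih =>
    rw [Function.iterate_succ_apply', Function.iterate_succ_apply',
      pdx_pdz_comm (hf.dz_iter n), ih]

lemma pdy_pdz_iter_comm (hf : Sm f) (n : ℕ) : pdy (pdz^[n] f) = pdz^[n] (pdy f) := by
  induction n with
  | zero => rfl
  | succ n ih =>
    rw [Function.iterate_succ_apply', Function.iterate_succ_apply',
      pdy_pdz_comm (hf.dz_iter n), ih]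


lemma pdy_pdx_iter_comm (hf : Sm f) (n : ℕ) : pdy (pdx^[n] f) = pdx^[n] (pdy f) := by
  induction n with
  | zero => rfl
  | succ n ih =>
    rw [Function.iterate_succ_apply', Function.iterate_succ_apply',
      ← pdx_pdy_comm (hf.dx_iter n), ih]

lemma pdz_pdx_iter_comm (hf : Sm f) (n : ℕ) : pdz (pdx^[n] f) = pdx^[n] (pdz f) := by
  induction n with
  | zero => rfl
  | succ n ih =>
    rw [Function.iterate_succ_apply', Function.iterate_succ_apply',
      ← pdx_pdz_comm (hf.dx_iter n), ih]

lemma pdz_pdy_iter_comm (hf : Sm f) (n : ℕ) : pdz (pdy^[n] f) = pdy^[n] (pdz f) := by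
  induction n with
  | zero => rfl
  | succ n ih =>
    rw [Function.iterate_succ_apply', Function.iterate_succ_apply',
      ← pdy_pdz_comm (hf.dy_iter n), ih]

lemma Sm.pd3 (hf : Sm f) (α : ℕ × ℕ × ℕ) : Sm (pderiv3 α f) :=
  ((hf.dz_iter α.2.2).dy_iter α.2.1).dx_iter α.1

lemma pdx_pderiv3_comm (hf : Sm f) (α : ℕ × ℕ × ℕ) :
    pderiv3 α (pdx f) = pdx (pderiv3 α f) := by
  unfold pderiv3
  rw [← pdx_pdz_iter_comm hf α.2.2, ← pdx_pdy_iter_comm (hf.dz_iter α.2.2) α.2.1,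
    ← Function.iterate_succ_apply (f := pdx), Function.iterate_succ_apply']

lemma pdy_pderiv3_comm (hf : Sm f) (α : ℕ × ℕ × ℕ) :
    pderiv3 α (pdy f) = pdy (pderiv3 α f) := by
  unfold pderiv3
  rw [← pdy_pdz_iter_comm hf α.2.2, ← Function.iterate_succ_apply (f := pdy),
    Function.iterate_succ_apply', pdy_pdx_iter_comm ((hf.dz_iter α.2.2).dy_iter α.2.1)]

lemma pdz_pderiv3_comm (hf : Sm f) (α : ℕ × ℕ × ℕ) :
    pderiv3 α (pdz f) = pdz (pderiv3 α f) := by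
  unfold pderiv3
  rw [← Function.iterate_succ_apply (f := pdz), Function.iterate_succ_apply',
    pdz_pdx_iter_comm ((hf.dz_iter α.2.2).dy_iter α.2.1),
    pdz_pdy_iter_comm (hf.dz_iter α.2.2)]

lemma pderiv3_shift_x (hf : Sm f) (α : ℕ × ℕ × ℕ) :
    pderiv3 α (pdx f) = pderiv3 (α.1 + 1, α.2.1, α.2.2) f := by
  rw [pdx_pderiv3_comm hf α]
  unfold pderiv3
  rw [← Function.iterate_succ_apply' (f := pdx)]

lemma pderiv3_shift_y (hf : Sm f) (α : ℕ × ℕ × ℕ) :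
    pderiv3 α (pdy f) = pderiv3 (α.1, α.2.1 + 1, α.2.2) f := by
  unfold pderiv3
  rw [← pdy_pdz_iter_comm hf α.2.2, ← Function.iterate_succ_apply (f := pdy)]

lemma pderiv3_shift_z (hf : Sm f) (α : ℕ × ℕ × ℕ) :
    pderiv3 α (pdz f) = pderiv3 (α.1, α.2.1, α.2.2 + 1) f := by
  unfold pderiv3
  rw [← Function.iterate_succ_apply (f := pdz)]

end

section
variable {f g : ℝ → ℝ → ℝ → ℂ}

lemma GoodFn.sm (hf : GoodFn f) : Sm f := hf.smooth

lemma pdx_add (hf : Sm f) (hg : Sm g) : pdx (f + g) = pdx f + pdx g := by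
  funext x y z
  have h1 := hasDerivAt_slice1 (hf.differentiable (by norm_num)) x y z
  have h2 := hasDerivAt_slice1 (hg.differentiable (by norm_num)) x y z
  show deriv (fun x' => f x' y z + g x' y z) x
      = deriv (fun x' => f x' y z) x + deriv (fun x' => g x' y z) x
  exact deriv_add h1.differentiableAt h2.differentiableAt

lemma pdy_add (hf : Sm f) (hg : Sm g) : pdy (f + g) = pdy f + pdy g := by
  funext x y z
  have h1 := hasDerivAt_slice2 (hf.differentiable (by norm_num)) x y z
  have h2 := hasDerivAt_slice2 (hg.differentiable (by norm_num)) x y z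
  show deriv (fun y' => f x y' z + g x y' z) y
      = deriv (fun y' => f x y' z) y + deriv (fun y' => g x y' z) y
  exact deriv_add h1.differentiableAt h2.differentiableAt

lemma pdz_add (hf : Sm f) (hg : Sm g) : pdz (f + g) = pdz f + pdz g := by
  funext x y z
  have h1 := hasDerivAt_slice3 (hf.differentiable (by norm_num)) x y z
  have h2 := hasDerivAt_slice3 (hg.differentiable (by norm_num)) x y z
  show deriv (fun z' => f x y z' + g x y z') z
      = deriv (fun z' => f x y z') z + deriv (fun z' => g x y z') z
  exact deriv_add h1.differentiableAt h2.differentiableAt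

lemma pdx_neg : pdx (-f) = -pdx f := by
  funext x y z; exact deriv.neg

lemma pdy_neg : pdy (-f) = -pdy f := by
  funext x y z; exact deriv.neg

lemma pdz_neg : pdz (-f) = -pdz f := by
  funext x y z; exact deriv.neg

lemma Sm.add (hf : Sm f) (hg : Sm g) : Sm (f + g) := by
  have : Fn3 (f + g) = Fn3 f + Fn3 g := rfl
  unfold Sm; rw [this]; exact ContDiff.add hf hg

lemma Sm.neg' (hf : Sm f) : Sm (-f) := by
  have : Fn3 (-f) = -Fn3 f := rfl
  unfold Sm; rw [this]; exact ContDiff.neg hf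


lemma pdx_iter_add (hf : Sm f) (hg : Sm g) (n : ℕ) :
    pdx^[n] (f + g) = pdx^[n] f + pdx^[n] g := by
  induction n with
  | zero => rfl
  | succ n ih =>
    simp only [Function.iterate_succ_apply', ih, pdx_add (hf.dx_iter n) (hg.dx_iter n)]

lemma pdy_iter_add (hf : Sm f) (hg : Sm g) (n : ℕ) :
    pdy^[n] (f + g) = pdy^[n] f + pdy^[n] g := by
  induction n with
  | zero => rfl
  | succ n ih =>
    simp only [Function.iterate_succ_apply', ih, pdy_add (hf.dy_iter n) (hg.dy_iter n)]

lemma pdz_iter_add (hf : Sm f) (hg : Sm g) (n : ℕ) :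
    pdz^[n] (f + g) = pdz^[n] f + pdz^[n] g := by
  induction n with
  | zero => rfl
  | succ n ih =>
    simp only [Function.iterate_succ_apply', ih, pdz_add (hf.dz_iter n) (hg.dz_iter n)]

lemma pdx_iter_neg (n : ℕ) : pdx^[n] (-f) = -pdx^[n] f := by
  induction n with
  | zero => rfl
  | succ n ih => simp only [Function.iterate_succ_apply', ih, pdx_neg]

lemma pdy_iter_neg (n : ℕ) : pdy^[n] (-f) = -pdy^[n] f := by
  induction n with
  | zero => rfl
  | succ n ih => simp only [Function.iterate_succ_apply', ih, pdy_neg]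

lemma pdz_iter_neg (n : ℕ) : pdz^[n] (-f) = -pdz^[n] f := by
  induction n with
  | zero => rfl
  | succ n ih => simp only [Function.iterate_succ_apply', ih, pdz_neg]

lemma pderiv3_add (hf : Sm f) (hg : Sm g) (α : ℕ × ℕ × ℕ) :
    pderiv3 α (f + g) = pderiv3 α f + pderiv3 α g := by
  unfold pderiv3
  rw [pdz_iter_add hf hg, pdy_iter_add (hf.dz_iter _) (hg.dz_iter _),
    pdx_iter_add ((hf.dz_iter _).dy_iter _) ((hg.dz_iter _).dy_iter _)]

lemma pderiv3_neg (α : ℕ × ℕ × ℕ) : pderiv3 α (-f) = -pderiv3 α f := by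
  unfold pderiv3
  rw [pdz_iter_neg, pdy_iter_neg, pdx_iter_neg]

lemma GoodFn.dx (hf : GoodFn f) : GoodFn (pdx f) := by
  refine ⟨hf.sm.dx, ?_, ?_, ?_⟩
  · intro x y z
    show deriv (fun x' => f x' y z) (x + 1) = _
    rw [← deriv_comp_add_const (fun x' => f x' y z) 1]
    have : (fun x' => f (x' + 1) y z) = fun x' => f x' y z := by
      funext x'; exact hf.per_x x' y z
    show deriv (fun x' => f (x' + 1) y z) x = _
    rw [this]; rfl
  · intro x y z
    show deriv (fun x' => f x' y (z+1)) x = _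
    have : (fun x' => f x' y (z+1)) = fun x' => f x' y z := by
      funext x'; exact hf.per_z x' y z
    rw [this]; rfl
  · intro α n
    rw [pderiv3_shift_x hf.sm α]
    exact hf.decay _ n

lemma GoodFn.dy (hf : GoodFn f) : GoodFn (pdy f) := by
  refine ⟨hf.sm.dy, ?_, ?_, ?_⟩
  · intro x y z
    show deriv (fun y' => f (x+1) y' z) y = _
    have : (fun y' => f (x+1) y' z) = fun y' => f x y' z := by
      funext y'; exact hf.per_x x y' z
    rw [this]; rfl
  · intro x y z
    show deriv (fun y' => f x y' (z+1)) y = _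
    have : (fun y' => f x y' (z+1)) = fun y' => f x y' z := by
      funext y'; exact hf.per_z x y' z
    rw [this]; rfl
  · intro α n
    rw [pderiv3_shift_y hf.sm α]
    exact hf.decay _ n

lemma GoodFn.dz (hf : GoodFn f) : GoodFn (pdz f) := by
  refine ⟨hf.sm.dz, ?_, ?_, ?_⟩
  · intro x y z
    show deriv (fun z' => f (x+1) y z') z = _
    have : (fun z' => f (x+1) y z') = fun z' => f x y z' := by
      funext z'; exact hf.per_x x y z'
    rw [this]; rfl
  · intro x y z
    show deriv (fun z' => f x y z') (z + 1) = _
    rw [← deriv_comp_add_const (fun z' => f x y z') 1]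
    have : (fun z' => f x y (z' + 1)) = fun z' => f x y z' := by
      funext z'; exact hf.per_z x y z'
    show deriv (fun z' => f x y (z' + 1)) z = _
    rw [this]; rfl
  · intro α n
    rw [pderiv3_shift_z hf.sm α]
    exact hf.decay _ n

lemma GoodFn.add (hf : GoodFn f) (hg : GoodFn g) : GoodFn (f + g) := by
  have hsum : ∀ α, pderiv3 α (f + g) = pderiv3 α f + pderiv3 α g :=
    fun α => pderiv3_add hf.sm hg.sm α
  refine ⟨hf.sm.add hg.sm, ?_, ?_, ?_⟩
  · intro x y z; show f (x+1) y z + g (x+1) y z = _; rw [hf.per_x, hg.per_x]; rfl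
  · intro x y z; show f x y (z+1) + g x y (z+1) = _; rw [hf.per_z, hg.per_z]; rfl
  · intro α n
    obtain ⟨C1, h1⟩ := hf.decay α n
    obtain ⟨C2, h2⟩ := hg.decay α n
    refine ⟨C1 + C2, fun x y z => ?_⟩
    rw [hsum]
    calc ‖(pderiv3 α f + pderiv3 α g) x y z‖ * |y| ^ n
        ≤ (‖pderiv3 α f x y z‖ + ‖pderiv3 α g x y z‖) * |y| ^ n := by
          apply mul_le_mul_of_nonneg_right (norm_add_le _ _) (by positivity)
      _ = ‖pderiv3 α f x y z‖ * |y| ^ n + ‖pderiv3 α g x y z‖ * |y| ^ n := by ring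
      _ ≤ C1 + C2 := add_le_add (h1 x y z) (h2 x y z)

lemma GoodFn.neg' (hf : GoodFn f) : GoodFn (-f) := by
  have hneg : ∀ α, pderiv3 α (-f) = -pderiv3 α f := fun α => pderiv3_neg α
  refine ⟨hf.sm.neg', ?_, ?_, ?_⟩
  · intro x y z; show -f (x+1) y z = _; rw [hf.per_x]; rfl
  · intro x y z; show -f x y (z+1) = _; rw [hf.per_z]; rfl
  · intro α n
    obtain ⟨C1, h1⟩ := hf.decay α n
    refine ⟨C1, fun x y z => ?_⟩
    rw [hneg]
    simpa using h1 x y z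

end

section
open Filter Topology
variable {f g : ℝ → ℝ → ℝ → ℂ}

def muz : Measure ℝ := volume.restrict (Set.Ioc (0:ℝ) 1)
def nu2 : Measure (ℝ × ℝ) := volume.prod muz
def muOm : Measure (ℝ × ℝ × ℝ) := muz.prod nu2

instance : IsFiniteMeasure muz := by
  constructor
  unfold muz
  rw [Measure.restrict_apply_univ]
  simp [Real.volume_Ioc]

instance : SigmaFinite muz := by infer_instance
instance : SigmaFinite nu2 := by unfold nu2; infer_instance

/-- Tame: continuous with quadratic decay in `y`. -/
structure Tame (f : ℝ → ℝ → ℝ → ℂ) : Prop where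
  cont : Continuous (Fn3 f)
  bound : ∃ C : ℝ, ∀ x y z, ‖f x y z‖ * (1 + y^2) ≤ C

lemma Tame.bound' (hf : Tame f) : ∃ C : ℝ, 0 ≤ C ∧ ∀ p : ℝ × ℝ × ℝ,
    ‖Fn3 f p‖ ≤ C * (1 + p.2.1^2)⁻¹ := by
  obtain ⟨C, hC⟩ := hf.bound
  have h0 : (0:ℝ) ≤ C := le_trans (by positivity) (hC 0 0 0)
  refine ⟨C, h0, fun p => ?_⟩
  have h1 : (0:ℝ) < 1 + p.2.1^2 := by positivity
  calc ‖Fn3 f p‖ = ‖f p.1 p.2.1 p.2.2‖ := rfl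
    _ ≤ C / (1 + p.2.1^2) := by
        rw [le_div_iff₀ h1]; exact hC p.1 p.2.1 p.2.2
    _ = C * (1 + p.2.1^2)⁻¹ := by rw [div_eq_mul_inv]

lemma GoodFn.tame (hf : GoodFn f) : Tame f := by
  refine ⟨hf.smooth.continuous, ?_⟩
  obtain ⟨C0, h0⟩ := hf.decay (0,0,0) 0
  obtain ⟨C2, h2⟩ := hf.decay (0,0,0) 2
  refine ⟨C0 + C2, fun x y z => ?_⟩
  have e : pderiv3 (0,0,0) f = f := rfl
  have h0' := h0 x y z; have h2' := h2 x y z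
  rw [e] at h0' h2'
  have : ‖f x y z‖ * (1 + y^2) = ‖f x y z‖ * |y|^0 + ‖f x y z‖ * |y|^2 := by
    rw [pow_zero, sq_abs]; ring
  rw [this]
  exact add_le_add h0' h2'

lemma integrable_w3 : Integrable (fun p : ℝ × ℝ × ℝ => (1 + p.2.1^2)⁻¹) muOm := by
  have h1 : Integrable (fun y : ℝ => (1 + y^2)⁻¹) volume := integrable_inv_one_add_sq
  have h2 : Integrable (fun q : ℝ × ℝ => (1 + q.1^2)⁻¹ * (1:ℝ)) nu2 :=
    h1.mul_prod (integrable_const 1)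
  have h3 : Integrable (fun p : ℝ × ℝ × ℝ => (1:ℝ) * ((1 + p.2.1^2)⁻¹ * 1)) muOm :=
    (integrable_const (1:ℝ)).mul_prod h2
  simpa using h3

lemma integrable_of_bound3 {h : ℝ × ℝ × ℝ → ℂ} (hc : Continuous h) {C : ℝ}
    (hb : ∀ p, ‖h p‖ ≤ C * (1 + p.2.1^2)⁻¹) : Integrable h muOm := by
  refine (integrable_w3.const_mul C).mono' hc.aestronglyMeasurable ?_
  filter_upwards with p
  exact hb p

lemma Tame.integrable_mul (hf : Tame f) (hg : Tame g) :
    Integrable (fun p => Fn3 f p * (starRingEnd ℂ) (Fn3 g p)) muOm := by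
  obtain ⟨Cf, hCf0, hCf⟩ := hf.bound'
  obtain ⟨Cg, hCg0, hCg⟩ := hg.bound'
  refine integrable_of_bound3 (hf.cont.mul (Complex.continuous_conj.comp hg.cont)) (C := Cf * Cg)
    (fun p => ?_)
  have h1 : (0:ℝ) < 1 + p.2.1^2 := by positivity
  have hi : (1 + p.2.1^2)⁻¹ ≤ 1 := by
    rw [inv_le_one_iff₀]; right; nlinarith
  calc ‖Fn3 f p * (starRingEnd ℂ) (Fn3 g p)‖ = ‖Fn3 f p‖ * ‖Fn3 g p‖ := by
        rw [norm_mul, RCLike.norm_conj]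
    _ ≤ (Cf * (1 + p.2.1^2)⁻¹) * Cg := by
        apply mul_le_mul (hCf p) ?_ (norm_nonneg _) (by positivity)
        calc ‖Fn3 g p‖ ≤ Cg * (1 + p.2.1^2)⁻¹ := hCg p
          _ ≤ Cg * 1 := by nlinarith
          _ = Cg := mul_one Cg
    _ = (Cf * Cg) * (1 + p.2.1^2)⁻¹ := by ring

lemma Tame.integrable_normsq (hf : Tame f) :
    Integrable (fun p => ‖Fn3 f p‖^2) muOm := by
  have h := (hf.integrable_mul hf).norm
  have e : (fun p => ‖Fn3 f p * (starRingEnd ℂ) (Fn3 f p)‖) = fun p => ‖Fn3 f p‖^2 := by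
    funext p; rw [norm_mul, RCLike.norm_conj, sq]
  rwa [e] at h

end

section
open Filter Topology
variable {f g h : ℝ → ℝ → ℝ → ℂ}

lemma Tame.add (hf : Tame f) (hg : Tame g) : Tame (f + g) := by
  obtain ⟨Cf, hCf⟩ := hf.bound
  obtain ⟨Cg, hCg⟩ := hg.bound
  refine ⟨by exact hf.cont.add hg.cont, ⟨Cf + Cg, fun x y z => ?_⟩⟩
  calc ‖(f + g) x y z‖ * (1 + y^2) ≤ (‖f x y z‖ + ‖g x y z‖) * (1 + y^2) := by
        apply mul_le_mul_of_nonneg_right (norm_add_le _ _) (by positivity)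
    _ = ‖f x y z‖ * (1 + y^2) + ‖g x y z‖ * (1 + y^2) := by ring
    _ ≤ Cf + Cg := add_le_add (hCf x y z) (hCg x y z)

lemma Tame.neg' (hf : Tame f) : Tame (-f) := by
  obtain ⟨Cf, hCf⟩ := hf.bound
  exact ⟨by exact hf.cont.neg, ⟨Cf, fun x y z => by simpa using hCf x y z⟩⟩

def Inn (f g : ℝ → ℝ → ℝ → ℂ) : ℂ := ∫ p, Fn3 f p * (starRingEnd ℂ) (Fn3 g p) ∂muOm

lemma inn_self_re (hf : Tame f) : (Inn f f).re = ∫ p, ‖Fn3 f p‖^2 ∂muOm := by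
  unfold Inn
  have e : (fun p => Fn3 f p * (starRingEnd ℂ) (Fn3 f p))
      = fun p => ((‖Fn3 f p‖^2 : ℝ) : ℂ) := by
    funext p
    rw [Complex.mul_conj]
    norm_cast
    simp [Complex.normSq_eq_norm_sq]
  rw [e]
  rw [show (fun p => ((‖Fn3 f p‖^2 : ℝ) : ℂ)) = fun p => ((RCLike.ofReal (‖Fn3 f p‖^2)) : ℂ) from rfl]
  rw [integral_ofReal]
  rfl

lemma L2sq_eq_s17 (hf : Tame f) : L2sq f = ∫ p, ‖Fn3 f p‖^2 ∂muOm := by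
  have hI := hf.integrable_normsq
  unfold muOm at hI ⊢
  rw [integral_prod _ hI]
  unfold L2sq
  apply integral_congr_ae
  filter_upwards [hI.prod_right_ae] with x hx
  exact (integral_prod _ hx).symm

lemma L2sq_eq_inn (hf : Tame f) : L2sq f = (Inn f f).re := by
  rw [L2sq_eq_s17 hf, inn_self_re hf]

lemma L2sq_nonneg_s17 (hf : Tame f) : 0 ≤ L2sq f := by
  rw [L2sq_eq_s17 hf]
  exact integral_nonneg (fun p => by positivity)

lemma inn_add_left (hf : Tame f) (hg : Tame g) (hh : Tame h) :
    Inn (f + g) h = Inn f h + Inn g h := by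
  unfold Inn
  rw [← integral_add (hf.integrable_mul hh) (hg.integrable_mul hh)]
  congr 1; funext p
  show (Fn3 f p + Fn3 g p) * _ = _
  ring

lemma inn_neg_left : Inn (-f) g = - Inn f g := by
  unfold Inn
  rw [← integral_neg]
  congr 1; funext p
  show (- Fn3 f p) * _ = _
  ring

lemma inn_neg_right : Inn f (-g) = - Inn f g := by
  unfold Inn
  rw [← integral_neg]
  congr 1; funext p
  show Fn3 f p * (starRingEnd ℂ) (- Fn3 g p) = _
  rw [map_neg]; ring

lemma inn_add_right (hf : Tame f) (hg : Tame g) (hh : Tame h) :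
    Inn f (g + h) = Inn f g + Inn f h := by
  unfold Inn
  rw [← integral_add (hf.integrable_mul hg) (hf.integrable_mul hh)]
  congr 1; funext p
  show Fn3 f p * (starRingEnd ℂ) (Fn3 g p + Fn3 h p) = _
  rw [map_add]; ring

lemma inn_conj_symm : Inn g f = (starRingEnd ℂ) (Inn f g) := by
  unfold Inn
  rw [← integral_conj]
  congr 1; funext p
  rw [map_mul, Complex.conj_conj]; ring

lemma inn_CS (hf : Tame f) (hg : Tame g) :
    ‖Inn f g‖ ≤ Real.sqrt (L2sq f) * Real.sqrt (L2sq g) := by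
  set A := ∫ p, ‖Fn3 f p‖^2 ∂muOm with hA
  set Cc := ∫ p, ‖Fn3 g p‖^2 ∂muOm with hC
  set B := ∫ p, ‖Fn3 f p‖ * ‖Fn3 g p‖ ∂muOm with hB
  have hiA : Integrable (fun p => ‖Fn3 f p‖^2) muOm := hf.integrable_normsq
  have hiC : Integrable (fun p => ‖Fn3 g p‖^2) muOm := hg.integrable_normsq
  have hiB : Integrable (fun p => ‖Fn3 f p‖ * ‖Fn3 g p‖) muOm := by
    have := (hf.integrable_mul hg).norm
    have e : (fun p => ‖Fn3 f p * (starRingEnd ℂ) (Fn3 g p)‖)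
        = fun p => ‖Fn3 f p‖ * ‖Fn3 g p‖ := by
      funext p; rw [norm_mul, RCLike.norm_conj]
    rwa [e] at this
  have hA0 : 0 ≤ A := integral_nonneg (fun p => by positivity)
  have hC0 : 0 ≤ Cc := integral_nonneg (fun p => by positivity)
  have hB0 : 0 ≤ B := integral_nonneg (fun p => by positivity)
  have hquad : ∀ t : ℝ, 0 ≤ A * (t*t) + (2*B) * t + Cc := by
    intro t
    have h1 : Integrable (fun p => ‖Fn3 f p‖^2 * (t*t)) muOm := hiA.mul_const _
    have h2 : Integrable (fun p => (2*t) * (‖Fn3 f p‖ * ‖Fn3 g p‖)) muOm := hiB.const_mul _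
    have e3 := integral_add (h1.add h2) hiC
    have e4 := integral_add h1 h2
    simp only [Pi.add_apply] at e3 e4
    have e1 : ∫ p, ‖Fn3 f p‖^2 * (t*t) ∂muOm = A * (t*t) := integral_mul_const _ _
    have e2 : ∫ p, (2*t) * (‖Fn3 f p‖ * ‖Fn3 g p‖) ∂muOm = (2*t) * B :=
      integral_const_mul _ _
    have nn : 0 ≤ ∫ p, (‖Fn3 f p‖^2 * (t*t) + (2*t) * (‖Fn3 f p‖ * ‖Fn3 g p‖)
        + ‖Fn3 g p‖^2) ∂muOm := by
      apply integral_nonneg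
      intro p
      simp only [Pi.zero_apply]
      nlinarith [sq_nonneg (t * ‖Fn3 f p‖ + ‖Fn3 g p‖), norm_nonneg (Fn3 f p),
        norm_nonneg (Fn3 g p)]
    rw [e3, e4, e1, e2] at nn
    nlinarith [nn]
  have hd := discrim_le_zero hquad
  rw [discrim] at hd
  have hBAC : B^2 ≤ A * Cc := by nlinarith
  have hnormle : ‖Inn f g‖ ≤ B := by
    unfold Inn
    refine le_trans (norm_integral_le_integral_norm _) (le_of_eq ?_)
    congr 1; funext p
    rw [norm_mul, RCLike.norm_conj]
  rw [L2sq_eq_s17 hf, L2sq_eq_s17 hg, ← hA, ← hC, ← Real.sqrt_mul hA0]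
  calc ‖Inn f g‖ ≤ B := hnormle
    _ ≤ Real.sqrt (A * Cc) := by
        rw [← Real.sqrt_sq hB0]
        exact Real.sqrt_le_sqrt hBAC

lemma inn_re_CS (hf : Tame f) (hg : Tame g) :
    (Inn f g).re ≤ Real.sqrt (L2sq f) * Real.sqrt (L2sq g) :=
  le_trans (Complex.re_le_norm _) (inn_CS hf hg)

end

section
open Filter Topology
variable {f g : ℝ → ℝ → ℝ → ℂ}

lemma hasDerivAt_pd_x (hf : Sm f) (x y z : ℝ) :
    HasDerivAt (fun x' => f x' y z) (pdx f x y z) x := by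
  have h := hasDerivAt_slice1 (hf.differentiable (by norm_num)) x y z
  rwa [show fderiv ℝ (Fn3 f) (x,y,z) e1 = pdx f x y z from
    (congrFun (Fn3_pdx hf) (x,y,z)).symm] at h

lemma hasDerivAt_pd_y (hf : Sm f) (x y z : ℝ) :
    HasDerivAt (fun y' => f x y' z) (pdy f x y z) y := by
  have h := hasDerivAt_slice2 (hf.differentiable (by norm_num)) x y z
  rwa [show fderiv ℝ (Fn3 f) (x,y,z) e2 = pdy f x y z from
    (congrFun (Fn3_pdy hf) (x,y,z)).symm] at h

lemma hasDerivAt_pd_z (hf : Sm f) (x y z : ℝ) :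
    HasDerivAt (fun z' => f x y z') (pdz f x y z) z := by
  have h := hasDerivAt_slice3 (hf.differentiable (by norm_num)) x y z
  rwa [show fderiv ℝ (Fn3 f) (x,y,z) e3 = pdz f x y z from
    (congrFun (Fn3_pdz hf) (x,y,z)).symm] at h

lemma hasDerivAt_conj {u : ℝ → ℂ} {u' : ℂ} {t : ℝ} (h : HasDerivAt u u' t) :
    HasDerivAt (fun s => (starRingEnd ℂ) (u s)) ((starRingEnd ℂ) u') t := by
  have := (Complex.conjCLE.toContinuousLinearMap.hasFDerivAt (x := u t)).comp_hasDerivAt t h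
  exact this

lemma hasDerivAt_ppc_x (hf : Sm f) (hg : Sm g) (x y z : ℝ) :
    HasDerivAt (fun x' => f x' y z * (starRingEnd ℂ) (g x' y z))
      (pdx f x y z * (starRingEnd ℂ) (g x y z)
        + f x y z * (starRingEnd ℂ) (pdx g x y z)) x :=
  (hasDerivAt_pd_x hf x y z).mul (hasDerivAt_conj (hasDerivAt_pd_x hg x y z))

lemma hasDerivAt_ppc_y (hf : Sm f) (hg : Sm g) (x y z : ℝ) :
    HasDerivAt (fun y' => f x y' z * (starRingEnd ℂ) (g x y' z))
      (pdy f x y z * (starRingEnd ℂ) (g x y z)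
        + f x y z * (starRingEnd ℂ) (pdy g x y z)) y :=
  (hasDerivAt_pd_y hf x y z).mul (hasDerivAt_conj (hasDerivAt_pd_y hg x y z))

lemma hasDerivAt_ppc_z (hf : Sm f) (hg : Sm g) (x y z : ℝ) :
    HasDerivAt (fun z' => f x y z' * (starRingEnd ℂ) (g x y z'))
      (pdz f x y z * (starRingEnd ℂ) (g x y z)
        + f x y z * (starRingEnd ℂ) (pdz g x y z)) z :=
  (hasDerivAt_pd_z hf x y z).mul (hasDerivAt_conj (hasDerivAt_pd_z hg x y z))

lemma circ_int_zero {h D : ℝ → ℂ} (hd : ∀ t, HasDerivAt h (D t) t)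
    (hD : Continuous D) (hper : h 1 = h 0) :
    ∫ t, D t ∂muz = 0 := by
  have : ∫ t, D t ∂muz = ∫ t in (0:ℝ)..1, D t := by
    unfold muz
    rw [intervalIntegral.integral_of_le zero_le_one]
  rw [this, intervalIntegral.integral_eq_sub_of_hasDerivAt (fun t _ => hd t)
    (hD.intervalIntegrable 0 1), hper, sub_self]

lemma line_int_zero {h D : ℝ → ℂ} (hd : ∀ t, HasDerivAt h (D t) t)
    (hD : Integrable D volume)
    (h0 : Tendsto h atTop (𝓝 0)) (h0' : Tendsto h atBot (𝓝 0)) :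
    ∫ t, D t = 0 := by
  have T1 : Tendsto (fun R : ℝ => ∫ t in (-R)..R, D t) atTop (𝓝 (∫ t, D t)) :=
    intervalIntegral_tendsto_integral hD tendsto_neg_atTop_atBot tendsto_id
  have T2 : ∀ R : ℝ, ∫ t in (-R)..R, D t = h R - h (-R) := fun R =>
    intervalIntegral.integral_eq_sub_of_hasDerivAt (fun t _ => hd t)
      hD.intervalIntegrable
  have T3 : Tendsto (fun R : ℝ => h R - h (-R)) atTop (𝓝 (0 - 0)) :=
    h0.sub (h0'.comp tendsto_neg_atTop_atBot)
  rw [sub_zero] at T3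
  have T4 : Tendsto (fun R : ℝ => ∫ t in (-R)..R, D t) atTop (𝓝 0) := by
    simp only [T2]; exact T3
  exact tendsto_nhds_unique T1 T4

lemma tendsto_decay_atTop {C : ℝ} :
    Tendsto (fun y : ℝ => C * (1 + y^2)⁻¹) atTop (𝓝 0) := by
  have h1 : Tendsto (fun y : ℝ => 1 + y^2) atTop atTop :=
    tendsto_atTop_add_const_left _ 1 (tendsto_pow_atTop two_ne_zero)
  have := h1.inv_tendsto_atTop
  simpa using this.const_mul C

lemma tendsto_decay_atBot {C : ℝ} :
    Tendsto (fun y : ℝ => C * (1 + y^2)⁻¹) atBot (𝓝 0) := by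
  have h0 : Tendsto (fun y : ℝ => |y|) atBot atTop := tendsto_abs_atBot_atTop
  have h1 : Tendsto (fun y : ℝ => 1 + y^2) atBot atTop := by
    have h2 := (tendsto_pow_atTop (n := 2) two_ne_zero).comp h0
    have e : (fun y : ℝ => y^2) = (fun y : ℝ => |y|^2) := by
      funext y; rw [sq_abs]
    rw [show (fun y : ℝ => 1 + y^2) = (fun y : ℝ => 1 + |y|^2) from by
      funext y; rw [sq_abs]]
    exact tendsto_atTop_add_const_left _ 1 h2
  have := h1.inv_tendsto_atTop
  simpa using this.const_mul C

/-- The combined IBP integrand is `μΩ`-integrable and bounded. -/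
lemma ppc_bound (hf : Tame f) (hg : Tame g) : ∃ C : ℝ, 0 ≤ C ∧ ∀ p : ℝ × ℝ × ℝ,
    ‖Fn3 f p * (starRingEnd ℂ) (Fn3 g p)‖ ≤ C * (1 + p.2.1^2)⁻¹ := by
  obtain ⟨Cf, hCf0, hCf⟩ := hf.bound'
  obtain ⟨Cg, hCg0, hCg⟩ := hg.bound'
  refine ⟨Cf * Cg, by positivity, fun p => ?_⟩
  have h1 : (0:ℝ) < 1 + p.2.1^2 := by positivity
  have hi : (1 + p.2.1^2)⁻¹ ≤ 1 := by rw [inv_le_one_iff₀]; right; nlinarith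
  calc ‖Fn3 f p * (starRingEnd ℂ) (Fn3 g p)‖ = ‖Fn3 f p‖ * ‖Fn3 g p‖ := by
        rw [norm_mul, RCLike.norm_conj]
    _ ≤ (Cf * (1 + p.2.1^2)⁻¹) * Cg := by
        apply mul_le_mul (hCf p) ?_ (norm_nonneg _) (by positivity)
        calc ‖Fn3 g p‖ ≤ Cg * (1 + p.2.1^2)⁻¹ := hCg p
          _ ≤ Cg * 1 := by nlinarith
          _ = Cg := mul_one Cg
    _ = (Cf * Cg) * (1 + p.2.1^2)⁻¹ := by ring

lemma ibp_x (hf : GoodFn f) (hg : GoodFn g) : Inn (pdx f) g = - Inn f (pdx g) := by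
  have i1 := (hf.dx.tame).integrable_mul hg.tame
  have i2 := (hf.tame).integrable_mul hg.dx.tame
  have hzero : ∫ p, (Fn3 (pdx f) p * (starRingEnd ℂ) (Fn3 g p)
      + Fn3 f p * (starRingEnd ℂ) (Fn3 (pdx g) p)) ∂muOm = 0 := by
    have hint : Integrable (fun p => Fn3 (pdx f) p * (starRingEnd ℂ) (Fn3 g p)
        + Fn3 f p * (starRingEnd ℂ) (Fn3 (pdx g) p)) muOm := i1.add i2
    unfold muOm at hint ⊢
    rw [integral_prod_symm _ hint]
    have hin : ∀ q : ℝ × ℝ, (∫ x, (Fn3 (pdx f) (x, q) * (starRingEnd ℂ) (Fn3 g (x, q))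
        + Fn3 f (x, q) * (starRingEnd ℂ) (Fn3 (pdx g) (x, q))) ∂muz) = 0 := by
      intro q
      apply circ_int_zero (h := fun x' => f x' q.1 q.2 * (starRingEnd ℂ) (g x' q.1 q.2))
      · intro t
        exact hasDerivAt_ppc_x hf.sm hg.sm t q.1 q.2
      · have c1 : Continuous fun x : ℝ => ((x : ℝ), q) := by continuity
        exact ((hf.dx.tame.cont.comp c1).mul
          (Complex.continuous_conj.comp (hg.tame.cont.comp c1))).add
          ((hf.tame.cont.comp c1).mul
            (Complex.continuous_conj.comp (hg.dx.tame.cont.comp c1)))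
      · show f 1 q.1 q.2 * (starRingEnd ℂ) (g 1 q.1 q.2)
            = f 0 q.1 q.2 * (starRingEnd ℂ) (g 0 q.1 q.2)
        rw [show (1:ℝ) = 0 + 1 from by ring, hf.per_x, hg.per_x]
    calc ∫ q : ℝ × ℝ, (∫ x, (Fn3 (pdx f) (x, q) * (starRingEnd ℂ) (Fn3 g (x, q))
          + Fn3 f (x, q) * (starRingEnd ℂ) (Fn3 (pdx g) (x, q))) ∂muz) ∂nu2
        = ∫ q : ℝ × ℝ, (0:ℂ) ∂nu2 := by
          apply integral_congr_ae
          filter_upwards with q using hin q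
      _ = 0 := integral_zero _ _
  rw [integral_add i1 i2] at hzero
  unfold Inn
  linear_combination hzero

lemma ibp_z (hf : GoodFn f) (hg : GoodFn g) : Inn (pdz f) g = - Inn f (pdz g) := by
  have i1 := (hf.dz.tame).integrable_mul hg.tame
  have i2 := (hf.tame).integrable_mul hg.dz.tame
  have hzero : ∫ p, (Fn3 (pdz f) p * (starRingEnd ℂ) (Fn3 g p)
      + Fn3 f p * (starRingEnd ℂ) (Fn3 (pdz g) p)) ∂muOm = 0 := by
    have hint : Integrable (fun p => Fn3 (pdz f) p * (starRingEnd ℂ) (Fn3 g p)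
        + Fn3 f p * (starRingEnd ℂ) (Fn3 (pdz g) p)) muOm := i1.add i2
    unfold muOm at hint ⊢
    rw [integral_prod _ hint]
    have hin : ∀ x : ℝ, ∀ y : ℝ, (∫ z, (Fn3 (pdz f) (x, y, z) * (starRingEnd ℂ) (Fn3 g (x, y, z))
        + Fn3 f (x, y, z) * (starRingEnd ℂ) (Fn3 (pdz g) (x, y, z))) ∂muz) = 0 := by
      intro x y
      apply circ_int_zero (h := fun z' => f x y z' * (starRingEnd ℂ) (g x y z'))
      · intro t
        exact hasDerivAt_ppc_z hf.sm hg.sm x y t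
      · have c1 : Continuous fun z : ℝ => ((x : ℝ), (y : ℝ), (z : ℝ)) := by continuity
        exact ((hf.dz.tame.cont.comp c1).mul
          (Complex.continuous_conj.comp (hg.tame.cont.comp c1))).add
          ((hf.tame.cont.comp c1).mul
            (Complex.continuous_conj.comp (hg.dz.tame.cont.comp c1)))
      · show f x y 1 * (starRingEnd ℂ) (g x y 1)
            = f x y 0 * (starRingEnd ℂ) (g x y 0)
        rw [show (1:ℝ) = 0 + 1 from by ring, hf.per_z, hg.per_z]
    calc ∫ x, (∫ q : ℝ × ℝ, (Fn3 (pdz f) (x, q) * (starRingEnd ℂ) (Fn3 g (x, q))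
          + Fn3 f (x, q) * (starRingEnd ℂ) (Fn3 (pdz g) (x, q))) ∂nu2) ∂muz
        = ∫ x, (0:ℂ) ∂muz := by
          apply integral_congr_ae
          filter_upwards [hint.prod_right_ae] with x hx
          unfold nu2
          rw [integral_prod _ hx]
          calc (∫ y, ∫ z, (Fn3 (pdz f) (x, y, z) * (starRingEnd ℂ) (Fn3 g (x, y, z))
                + Fn3 f (x, y, z) * (starRingEnd ℂ) (Fn3 (pdz g) (x, y, z))) ∂muz)
              = ∫ y, (0:ℂ) := by
                apply integral_congr_ae
                filter_upwards with y using hin x y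
            _ = 0 := integral_zero _ _
      _ = 0 := integral_zero _ _
  rw [integral_add i1 i2] at hzero
  unfold Inn
  linear_combination hzero

lemma ibp_y (hf : GoodFn f) (hg : GoodFn g) : Inn (pdy f) g = - Inn f (pdy g) := by
  have i1 := (hf.dy.tame).integrable_mul hg.tame
  have i2 := (hf.tame).integrable_mul hg.dy.tame
  obtain ⟨C1, hC10, hC1⟩ := ppc_bound hf.dy.tame hg.tame
  obtain ⟨C2, hC20, hC2⟩ := ppc_bound hf.tame hg.dy.tame
  obtain ⟨C3, hC30, hC3⟩ := ppc_bound hf.tame hg.tame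
  have hzero : ∫ p, (Fn3 (pdy f) p * (starRingEnd ℂ) (Fn3 g p)
      + Fn3 f p * (starRingEnd ℂ) (Fn3 (pdy g) p)) ∂muOm = 0 := by
    have hint : Integrable (fun p => Fn3 (pdy f) p * (starRingEnd ℂ) (Fn3 g p)
        + Fn3 f p * (starRingEnd ℂ) (Fn3 (pdy g) p)) muOm := i1.add i2
    unfold muOm at hint ⊢
    rw [integral_prod _ hint]
    have hin : ∀ x : ℝ, ∀ z : ℝ, (∫ y, (Fn3 (pdy f) (x, y, z) * (starRingEnd ℂ) (Fn3 g (x, y, z))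
        + Fn3 f (x, y, z) * (starRingEnd ℂ) (Fn3 (pdy g) (x, y, z))) ∂volume) = 0 := by
      intro x z
      apply line_int_zero (h := fun y' => f x y' z * (starRingEnd ℂ) (g x y' z))
      · intro t
        exact hasDerivAt_ppc_y hf.sm hg.sm x t z
      · have c1 : Continuous fun y : ℝ => ((x : ℝ), (y : ℝ), (z : ℝ)) := by continuity
        have hc : Continuous fun y : ℝ => (Fn3 (pdy f) (x, y, z) * (starRingEnd ℂ) (Fn3 g (x, y, z))
            + Fn3 f (x, y, z) * (starRingEnd ℂ) (Fn3 (pdy g) (x, y, z))) :=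
          ((hf.dy.tame.cont.comp c1).mul
            (Complex.continuous_conj.comp (hg.tame.cont.comp c1))).add
            ((hf.tame.cont.comp c1).mul
              (Complex.continuous_conj.comp (hg.dy.tame.cont.comp c1)))
        refine ((integrable_inv_one_add_sq.const_mul (C1 + C2)).mono'
          hc.aestronglyMeasurable ?_)
        filter_upwards with y
        calc ‖Fn3 (pdy f) (x, y, z) * (starRingEnd ℂ) (Fn3 g (x, y, z))
              + Fn3 f (x, y, z) * (starRingEnd ℂ) (Fn3 (pdy g) (x, y, z))‖
            ≤ ‖Fn3 (pdy f) (x, y, z) * (starRingEnd ℂ) (Fn3 g (x, y, z))‖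
              + ‖Fn3 f (x, y, z) * (starRingEnd ℂ) (Fn3 (pdy g) (x, y, z))‖ := norm_add_le _ _
          _ ≤ C1 * (1 + y^2)⁻¹ + C2 * (1 + y^2)⁻¹ := add_le_add (hC1 (x,y,z)) (hC2 (x,y,z))
          _ = (C1 + C2) * (1 + y^2)⁻¹ := by ring
      · exact squeeze_zero_norm (fun y => hC3 (x, y, z)) tendsto_decay_atTop
      · exact squeeze_zero_norm (fun y => hC3 (x, y, z)) tendsto_decay_atBot
    calc ∫ x, (∫ q : ℝ × ℝ, (Fn3 (pdy f) (x, q) * (starRingEnd ℂ) (Fn3 g (x, q))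
          + Fn3 f (x, q) * (starRingEnd ℂ) (Fn3 (pdy g) (x, q))) ∂nu2) ∂muz
        = ∫ x, (0:ℂ) ∂muz := by
          apply integral_congr_ae
          filter_upwards [hint.prod_right_ae] with x hx
          unfold nu2
          rw [integral_prod_symm _ hx]
          calc (∫ z, ∫ y, (Fn3 (pdy f) (x, y, z) * (starRingEnd ℂ) (Fn3 g (x, y, z))
                + Fn3 f (x, y, z) * (starRingEnd ℂ) (Fn3 (pdy g) (x, y, z))) ∂volume ∂muz)
              = ∫ z, (0:ℂ) ∂muz := by
                apply integral_congr_ae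
                filter_upwards with z using hin x z
            _ = 0 := integral_zero _ _
      _ = 0 := integral_zero _ _
  rw [integral_add i1 i2] at hzero
  unfold Inn
  linear_combination hzero

end

section
variable {f g h u : ℝ → ℝ → ℝ → ℂ}

lemma GoodFn.dx_iter (hf : GoodFn f) (n : ℕ) : GoodFn (pdx^[n] f) := by
  induction n with
  | zero => exact hf
  | succ n ih => rw [Function.iterate_succ_apply']; exact ih.dx

lemma GoodFn.dy_iter (hf : GoodFn f) (n : ℕ) : GoodFn (pdy^[n] f) := by
  induction n with
  | zero => exact hf
  | succ n ih => rw [Function.iterate_succ_apply']; exact ih.dy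

lemma GoodFn.dz_iter (hf : GoodFn f) (n : ℕ) : GoodFn (pdz^[n] f) := by
  induction n with
  | zero => exact hf
  | succ n ih => rw [Function.iterate_succ_apply']; exact ih.dz

lemma GoodFn.pd3 (hf : GoodFn f) (α : ℕ × ℕ × ℕ) : GoodFn (pderiv3 α f) :=
  ((hf.dz_iter α.2.2).dy_iter α.2.1).dx_iter α.1

/-- `Inn X (pd? Y) = - Inn (pd? X) Y` versions. -/
lemma ibp_x' (hf : GoodFn f) (hg : GoodFn g) : Inn f (pdx g) = - Inn (pdx f) g := by
  rw [ibp_x hf hg]; ring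

lemma ibp_y' (hf : GoodFn f) (hg : GoodFn g) : Inn f (pdy g) = - Inn (pdy f) g := by
  rw [ibp_y hf hg]; ring

lemma ibp_z' (hf : GoodFn f) (hg : GoodFn g) : Inn f (pdz g) = - Inn (pdz f) g := by
  rw [ibp_z hf hg]; ring

lemma cross_xz (hu : GoodFn u) :
    (Inn (pdx (pdx u)) (pdz (pdz u))).re = L2sq (pdz (pdx u)) := by
  have e1 : Inn (pdx (pdx u)) (pdz (pdz u)) = - Inn (pdx u) (pdx (pdz (pdz u))) :=
    ibp_x hu.dx hu.dz.dz
  rw [e1, pdx_pdz_comm hu.dz.sm, ibp_z' hu.dx hu.dz.dx, pdx_pdz_comm hu.sm]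
  rw [neg_neg, ← L2sq_eq_inn hu.dx.dz.tame]

lemma cross_xy (hu : GoodFn u) :
    (Inn (pdx (pdx u)) (pdy (pdy u))).re = L2sq (pdy (pdx u)) := by
  have e1 : Inn (pdx (pdx u)) (pdy (pdy u)) = - Inn (pdx u) (pdx (pdy (pdy u))) :=
    ibp_x hu.dx hu.dy.dy
  rw [e1, pdx_pdy_comm hu.dy.sm, ibp_y' hu.dx hu.dy.dx, pdx_pdy_comm hu.sm]
  rw [neg_neg, ← L2sq_eq_inn hu.dx.dy.tame]

lemma cross_yz (hu : GoodFn u) :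
    (Inn (pdy (pdy u)) (pdz (pdz u))).re = L2sq (pdz (pdy u)) := by
  have e1 : Inn (pdy (pdy u)) (pdz (pdz u)) = - Inn (pdy u) (pdy (pdz (pdz u))) :=
    ibp_y hu.dy hu.dz.dz
  rw [e1, pdy_pdz_comm hu.dz.sm, ibp_z' hu.dy hu.dz.dy, pdy_pdz_comm hu.sm]
  rw [neg_neg, ← L2sq_eq_inn hu.dy.dz.tame]

lemma L2sq_add_expand (hf : Tame f) (hg : Tame g) :
    L2sq (f + g) = L2sq f + 2 * (Inn f g).re + L2sq g := by
  rw [L2sq_eq_inn (hf.add hg), inn_add_left hf hg (hf.add hg),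
    inn_add_right hf hf hg, inn_add_right hg hf hg]
  have : Inn g f = (starRingEnd ℂ) (Inn f g) := inn_conj_symm
  rw [L2sq_eq_inn hf, L2sq_eq_inn hg]
  simp [this, Complex.add_re, Complex.conj_re]
  ring

lemma L2sq_neg' : L2sq (-f) = L2sq f := by
  unfold L2sq
  congr 1; funext x; congr 1; funext y; congr 1; funext z
  rw [show (-f) x y z = -(f x y z) from rfl, norm_neg]

lemma dxxzz_expand (hu : GoodFn u) :
    L2sq (dxxzz u) = L2sq (pdx (pdx u)) + 2 * L2sq (pdz (pdx u)) + L2sq (pdz (pdz u)) := by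
  unfold dxxzz
  rw [L2sq_add_expand hu.dx.dx.tame hu.dz.dz.tame, cross_xz hu]

lemma lap_expand (hu : GoodFn u) :
    L2sq (lap u) = L2sq (pdx (pdx u)) + L2sq (pdy (pdy u)) + L2sq (pdz (pdz u))
      + 2 * L2sq (pdy (pdx u)) + 2 * L2sq (pdz (pdx u)) + 2 * L2sq (pdz (pdy u)) := by
  unfold lap
  have t1 := hu.dx.dx.tame
  have t2 := hu.dy.dy.tame
  have t3 := hu.dz.dz.tame
  rw [L2sq_add_expand (t1.add t2) t3, L2sq_add_expand t1 t2,
    inn_add_left t1 t2 t3]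
  rw [Complex.add_re, cross_xy hu, cross_xz hu, cross_yz hu]
  ring

lemma sqrt_add_le {a b : ℝ} (ha : 0 ≤ a) (hb : 0 ≤ b) :
    Real.sqrt (a + b) ≤ Real.sqrt a + Real.sqrt b := by
  rw [show a + b = a + b from rfl]
  have h1 : a + b ≤ (Real.sqrt a + Real.sqrt b)^2 := by
    have := Real.sq_sqrt ha
    have := Real.sq_sqrt hb
    have := Real.sqrt_nonneg a
    have := Real.sqrt_nonneg b
    nlinarith
  calc Real.sqrt (a + b) ≤ Real.sqrt ((Real.sqrt a + Real.sqrt b)^2) :=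
        Real.sqrt_le_sqrt h1
    _ = Real.sqrt a + Real.sqrt b := Real.sqrt_sq (by positivity)

lemma L2norm_triangle (hf : Tame f) (hg : Tame g) :
    L2norm (f + g) ≤ L2norm f + L2norm g := by
  unfold L2norm
  rw [L2sq_add_expand hf hg]
  have hC := inn_re_CS hf hg
  have h1 : L2sq f + 2 * (Inn f g).re + L2sq g
      ≤ (Real.sqrt (L2sq f) + Real.sqrt (L2sq g))^2 := by
    have := Real.sq_sqrt (L2sq_nonneg_s17 hf)
    have := Real.sq_sqrt (L2sq_nonneg_s17 hg)
    nlinarith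
  calc Real.sqrt (L2sq f + 2 * (Inn f g).re + L2sq g)
      ≤ Real.sqrt ((Real.sqrt (L2sq f) + Real.sqrt (L2sq g))^2) := Real.sqrt_le_sqrt h1
    _ = _ := Real.sqrt_sq (by positivity)

lemma interp_z (hu : GoodFn u) :
    L2sq (pdy (pdy (pdz u)))
      ≤ Real.sqrt (L2sq (pdy (pdy (pdy u)))) * Real.sqrt (L2sq (pdy (pdz (pdz u)))) := by
  have eQ : pdy (pdy (pdz u)) = pdz (pdy (pdy u)) := by
    rw [pdy_pdz_comm hu.sm, pdy_pdz_comm hu.dy.sm]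
  have e1 : Inn (pdy (pdy (pdz u))) (pdy (pdy (pdz u)))
      = Inn (pdz (pdy (pdy u))) (pdy (pdy (pdz u))) := by rw [← eQ]
  have e2 : Inn (pdz (pdy (pdy u))) (pdy (pdy (pdz u)))
      = - Inn (pdy (pdy u)) (pdz (pdy (pdy (pdz u)))) := ibp_z hu.dy.dy hu.dz.dy.dy
  have e3 : pdz (pdy (pdy (pdz u))) = pdy (pdz (pdy (pdz u))) :=
    (pdy_pdz_comm hu.dz.dy.sm).symm
  have e4 : Inn (pdy (pdy u)) (pdy (pdz (pdy (pdz u))))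
      = - Inn (pdy (pdy (pdy u))) (pdz (pdy (pdz u))) :=
    ibp_y' hu.dy.dy hu.dz.dy.dz
  have e5 : pdz (pdy (pdz u)) = pdy (pdz (pdz u)) := (pdy_pdz_comm hu.dz.sm).symm
  have key : Inn (pdy (pdy (pdz u))) (pdy (pdy (pdz u)))
      = Inn (pdy (pdy (pdy u))) (pdy (pdz (pdz u))) := by
    rw [e1, e2, e3, e4, neg_neg, e5]
  calc L2sq (pdy (pdy (pdz u))) = (Inn (pdy (pdy (pdz u))) (pdy (pdy (pdz u)))).re :=
        L2sq_eq_inn hu.dz.dy.dy.tame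
    _ = (Inn (pdy (pdy (pdy u))) (pdy (pdz (pdz u)))).re := by rw [key]
    _ ≤ _ := inn_re_CS hu.dy.dy.dy.tame hu.dz.dz.dy.tame

lemma interp_x (hu : GoodFn u) :
    L2sq (pdy (pdy (pdx u)))
      ≤ Real.sqrt (L2sq (pdy (pdy (pdy u)))) * Real.sqrt (L2sq (pdy (pdx (pdx u)))) := by
  have eQ : pdy (pdy (pdx u)) = pdx (pdy (pdy u)) := by
    rw [← pdx_pdy_comm hu.sm, ← pdx_pdy_comm hu.dy.sm]
  have e2 : Inn (pdx (pdy (pdy u))) (pdy (pdy (pdx u)))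
      = - Inn (pdy (pdy u)) (pdx (pdy (pdy (pdx u)))) := ibp_x hu.dy.dy hu.dx.dy.dy
  have e3 : pdx (pdy (pdy (pdx u))) = pdy (pdx (pdy (pdx u))) :=
    pdx_pdy_comm hu.dx.dy.sm
  have e4 : Inn (pdy (pdy u)) (pdy (pdx (pdy (pdx u))))
      = - Inn (pdy (pdy (pdy u))) (pdx (pdy (pdx u))) :=
    ibp_y' hu.dy.dy hu.dx.dy.dx
  have e5 : pdx (pdy (pdx u)) = pdy (pdx (pdx u)) := pdx_pdy_comm hu.dx.sm
  have e1 : Inn (pdy (pdy (pdx u))) (pdy (pdy (pdx u)))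
      = Inn (pdx (pdy (pdy u))) (pdy (pdy (pdx u))) := by rw [← eQ]
  have key : Inn (pdy (pdy (pdx u))) (pdy (pdy (pdx u)))
      = Inn (pdy (pdy (pdy u))) (pdy (pdx (pdx u))) := by
    rw [e1, e2, e3, e4, neg_neg, e5]
  calc L2sq (pdy (pdy (pdx u))) = (Inn (pdy (pdy (pdx u))) (pdy (pdy (pdx u)))).re :=
        L2sq_eq_inn hu.dx.dy.dy.tame
    _ = (Inn (pdy (pdy (pdy u))) (pdy (pdx (pdx u)))).re := by rw [key]
    _ ≤ _ := inn_re_CS hu.dy.dy.dy.tame hu.dx.dx.dy.tame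

end

section
variable {f g u : ℝ → ℝ → ℝ → ℂ}

lemma Sm.lap' (hf : Sm f) : Sm (lap f) := (hf.dx.dx.add hf.dy.dy).add hf.dz.dz
lemma Sm.dxxzz' (hf : Sm f) : Sm (dxxzz f) := hf.dx.dx.add hf.dz.dz
lemma GoodFn.lap' (hf : GoodFn f) : GoodFn (lap f) := (hf.dx.dx.add hf.dy.dy).add hf.dz.dz
lemma GoodFn.dxxzz' (hf : GoodFn f) : GoodFn (dxxzz f) := hf.dx.dx.add hf.dz.dz

lemma lap_pdx_comm (hf : Sm f) : lap (pdx f) = pdx (lap f) := by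
  show _ = pdx ((pdx (pdx f) + pdy (pdy f)) + pdz (pdz f))
  rw [pdx_add (hf.dx.dx.add hf.dy.dy) hf.dz.dz, pdx_add hf.dx.dx hf.dy.dy,
    pdx_pdy_comm hf.dy, pdx_pdy_comm hf, pdx_pdz_comm hf.dz, pdx_pdz_comm hf]
  rfl

lemma lap_pdy_comm (hf : Sm f) : lap (pdy f) = pdy (lap f) := by
  show _ = pdy ((pdx (pdx f) + pdy (pdy f)) + pdz (pdz f))
  rw [pdy_add (hf.dx.dx.add hf.dy.dy) hf.dz.dz, pdy_add hf.dx.dx hf.dy.dy,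
    ← pdx_pdy_comm hf.dx, ← pdx_pdy_comm hf, pdy_pdz_comm hf.dz, pdy_pdz_comm hf]
  show lap (pdy f) = (pdx (pdx (pdy f)) + pdy (pdy (pdy f))) + pdz (pdz (pdy f))
  rfl

lemma lap_pdz_comm (hf : Sm f) : lap (pdz f) = pdz (lap f) := by
  show _ = pdz ((pdx (pdx f) + pdy (pdy f)) + pdz (pdz f))
  rw [pdz_add (hf.dx.dx.add hf.dy.dy) hf.dz.dz, pdz_add hf.dx.dx hf.dy.dy,
    ← pdx_pdz_comm hf.dx, ← pdx_pdz_comm hf, ← pdy_pdz_comm hf.dy, ← pdy_pdz_comm hf]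
  show lap (pdz f) = (pdx (pdx (pdz f)) + pdy (pdy (pdz f))) + pdz (pdz (pdz f))
  rfl

lemma dxxzz_pdy_comm (hf : Sm f) : dxxzz (pdy f) = pdy (dxxzz f) := by
  show _ = pdy (pdx (pdx f) + pdz (pdz f))
  rw [pdy_add hf.dx.dx hf.dz.dz, ← pdx_pdy_comm hf.dx, ← pdx_pdy_comm hf,
    pdy_pdz_comm hf.dz, pdy_pdz_comm hf]
  show dxxzz (pdy f) = pdx (pdx (pdy f)) + pdz (pdz (pdy f))
  rfl

lemma dxxzz_pdz_comm (hf : Sm f) : dxxzz (pdz f) = pdz (dxxzz f) := by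
  show _ = pdz (pdx (pdx f) + pdz (pdz f))
  rw [pdz_add hf.dx.dx hf.dz.dz, ← pdx_pdz_comm hf.dx, ← pdx_pdz_comm hf]
  show dxxzz (pdz f) = pdx (pdx (pdz f)) + pdz (pdz (pdz f))
  rfl

lemma dxxzz_pdx_comm (hf : Sm f) : dxxzz (pdx f) = pdx (dxxzz f) := by
  show _ = pdx (pdx (pdx f) + pdz (pdz f))
  rw [pdx_add hf.dx.dx hf.dz.dz, pdx_pdz_comm hf.dz, pdx_pdz_comm hf]
  rfl

lemma pderiv3_lap (hf : Sm f) (α : ℕ × ℕ × ℕ) :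
    pderiv3 α (lap f) = lap (pderiv3 α f) := by
  show pderiv3 α ((pdx (pdx f) + pdy (pdy f)) + pdz (pdz f)) = _
  rw [pderiv3_add (hf.dx.dx.add hf.dy.dy) hf.dz.dz, pderiv3_add hf.dx.dx hf.dy.dy,
    pdx_pderiv3_comm hf.dx, pdx_pderiv3_comm hf, pdy_pderiv3_comm hf.dy,
    pdy_pderiv3_comm hf, pdz_pderiv3_comm hf.dz, pdz_pderiv3_comm hf]
  rfl

lemma pderiv3_dxxzz (hf : Sm f) (α : ℕ × ℕ × ℕ) :
    pderiv3 α (dxxzz f) = dxxzz (pderiv3 α f) := by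
  show pderiv3 α (pdx (pdx f) + pdz (pdz f)) = _
  rw [pderiv3_add hf.dx.dx hf.dz.dz, pdx_pderiv3_comm hf.dx, pdx_pderiv3_comm hf,
    pdz_pderiv3_comm hf.dz, pdz_pderiv3_comm hf]
  rfl

lemma dxxzz_ge_xx (hu : GoodFn u) : L2sq (pdx (pdx u)) ≤ L2sq (dxxzz u) := by
  rw [dxxzz_expand hu]
  have := L2sq_nonneg_s17 hu.dx.dz.tame
  have := L2sq_nonneg_s17 hu.dz.dz.tame
  linarith

lemma dxxzz_ge_xz (hu : GoodFn u) : L2sq (pdz (pdx u)) ≤ L2sq (dxxzz u) := by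
  rw [dxxzz_expand hu]
  have := L2sq_nonneg_s17 hu.dx.dx.tame
  have := L2sq_nonneg_s17 hu.dx.dz.tame
  have := L2sq_nonneg_s17 hu.dz.dz.tame
  linarith

lemma dxxzz_ge_zz (hu : GoodFn u) : L2sq (pdz (pdz u)) ≤ L2sq (dxxzz u) := by
  rw [dxxzz_expand hu]
  have := L2sq_nonneg_s17 hu.dx.dx.tame
  have := L2sq_nonneg_s17 hu.dx.dz.tame
  linarith

lemma lap_nonneg_parts (hu : GoodFn u) :
    0 ≤ L2sq (pdx (pdx u)) ∧ 0 ≤ L2sq (pdy (pdy u)) ∧ 0 ≤ L2sq (pdz (pdz u))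
    ∧ 0 ≤ L2sq (pdy (pdx u)) ∧ 0 ≤ L2sq (pdz (pdx u)) ∧ 0 ≤ L2sq (pdz (pdy u)) :=
  ⟨L2sq_nonneg_s17 hu.dx.dx.tame, L2sq_nonneg_s17 hu.dy.dy.tame, L2sq_nonneg_s17 hu.dz.dz.tame,
   L2sq_nonneg_s17 hu.dx.dy.tame, L2sq_nonneg_s17 hu.dx.dz.tame, L2sq_nonneg_s17 hu.dy.dz.tame⟩

lemma lap_ge_xx (hu : GoodFn u) : L2sq (pdx (pdx u)) ≤ L2sq (lap u) := by
  rw [lap_expand hu]; obtain ⟨a,b,c,d,e,f⟩ := lap_nonneg_parts hu; linarith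

lemma lap_ge_yy (hu : GoodFn u) : L2sq (pdy (pdy u)) ≤ L2sq (lap u) := by
  rw [lap_expand hu]; obtain ⟨a,b,c,d,e,f⟩ := lap_nonneg_parts hu; linarith

lemma lap_ge_xy (hu : GoodFn u) : L2sq (pdy (pdx u)) ≤ L2sq (lap u) := by
  rw [lap_expand hu]; obtain ⟨a,b,c,d,e,f⟩ := lap_nonneg_parts hu; linarith

lemma lap_ge_xz (hu : GoodFn u) : L2sq (pdz (pdx u)) ≤ L2sq (lap u) := by
  rw [lap_expand hu]; obtain ⟨a,b,c,d,e,f⟩ := lap_nonneg_parts hu; linarith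

lemma lap_ge_yz (hu : GoodFn u) : L2sq (pdz (pdy u)) ≤ L2sq (lap u) := by
  rw [lap_expand hu]; obtain ⟨a,b,c,d,e,f⟩ := lap_nonneg_parts hu; linarith

lemma L2sq_add_le (hf : Tame f) (hg : Tame g) :
    L2sq (f + g) ≤ 2 * L2sq f + 2 * L2sq g := by
  rw [L2sq_add_expand hf hg]
  have h1 := inn_re_CS hf hg
  have h2 : Real.sqrt (L2sq f) * Real.sqrt (L2sq g)
      ≤ (L2sq f + L2sq g) / 2 := by
    have := Real.sq_sqrt (L2sq_nonneg_s17 hf)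
    have := Real.sq_sqrt (L2sq_nonneg_s17 hg)
    nlinarith [sq_nonneg (Real.sqrt (L2sq f) - Real.sqrt (L2sq g))]
  linarith

lemma pdx_le_grad (hg : GoodFn g) : L2norm (pdx g) ≤ gradL2norm g := by
  unfold L2norm gradL2norm
  apply Real.sqrt_le_sqrt
  have := L2sq_nonneg_s17 hg.dy.tame
  have := L2sq_nonneg_s17 hg.dz.tame
  linarith

lemma pdy_le_grad (hg : GoodFn g) : L2norm (pdy g) ≤ gradL2norm g := by
  unfold L2norm gradL2norm
  apply Real.sqrt_le_sqrt
  have := L2sq_nonneg_s17 hg.dx.tame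
  have := L2sq_nonneg_s17 hg.dz.tame
  linarith

lemma pdz_le_grad (hg : GoodFn g) : L2norm (pdz g) ≤ gradL2norm g := by
  unfold L2norm gradL2norm
  apply Real.sqrt_le_sqrt
  have := L2sq_nonneg_s17 hg.dx.tame
  have := L2sq_nonneg_s17 hg.dy.tame
  linarith

lemma sqrt_mul_le_half_add {p q : ℝ} (hp : 0 ≤ p) (hq : 0 ≤ q) :
    Real.sqrt (p * q) ≤ (p + q) / 2 := by
  have h1 : p * q ≤ ((p + q) / 2)^2 := by nlinarith [sq_nonneg (p - q)]
  calc Real.sqrt (p * q) ≤ Real.sqrt (((p + q)/2)^2) := Real.sqrt_le_sqrt h1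
    _ = (p + q) / 2 := Real.sqrt_sq (by positivity)

lemma lap_add' (hf : Sm f) (hg : Sm g) : lap (f + g) = lap f + lap g := by
  unfold lap
  rw [pdx_add hf hg, pdx_add hf.dx hg.dx, pdy_add hf hg, pdy_add hf.dy hg.dy,
    pdz_add hf hg, pdz_add hf.dz hg.dz]
  abel

lemma lap_neg' : lap (-f) = -lap f := by
  unfold lap
  rw [pdx_neg, pdx_neg, pdy_neg, pdy_neg, pdz_neg, pdz_neg]
  abel

lemma lap_split (u : ℝ → ℝ → ℝ → ℂ) : lap u = dxxzz u + pdy (pdy u) := by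
  unfold lap dxxzz
  abel

end


section
variable {u1 u2 u3 : ℝ → ℝ → ℝ → ℂ}

lemma pdy_sq_le_grad {g : ℝ → ℝ → ℝ → ℂ} (hg : GoodFn g) :
    L2sq (pdy g) ≤ (gradL2norm g)^2 := by
  unfold gradL2norm
  rw [Real.sq_sqrt (by
    have := L2sq_nonneg_s17 hg.dx.tame
    have := L2sq_nonneg_s17 hg.dy.tame
    have := L2sq_nonneg_s17 hg.dz.tame
    linarith)]
  have := L2sq_nonneg_s17 hg.dx.tame
  have := L2sq_nonneg_s17 hg.dz.tame
  linarith

lemma L2norm_eq_sqrt {g : ℝ → ℝ → ℝ → ℂ} : L2norm g = Real.sqrt (L2sq g) := rfl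

lemma L2sq_eq_L2norm_sq {g : ℝ → ℝ → ℝ → ℂ} (hg : Tame g) :
    L2sq g = (L2norm g)^2 := by
  rw [L2norm_eq_sqrt, Real.sq_sqrt (L2sq_nonneg_s17 hg)]

/-- Part (i), per-multi-index bound. -/
lemma partI_alpha (hu1 : GoodFn u1) (hu2 : GoodFn u2) (hu3 : GoodFn u3)
    (hdiv' : pdx u1 = -(pdy u2 + pdz u3)) (α : ℕ × ℕ × ℕ) :
    L2sq (pderiv3 α (pdx (pdx u1))) + L2sq (pderiv3 α (pdz (pdx u1)))
      + L2sq (pderiv3 α (pdx (pdx u2))) + L2sq (pderiv3 α (pdz (pdx u2)))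
      + L2sq (pderiv3 α (pdx (pdx u3))) + L2sq (pderiv3 α (pdz (pdx u3)))
      ≤ 6 * (L2sq (pderiv3 α (dxxzz u3)) + L2sq (pderiv3 α (lap u2))) := by
  have hA3 : pderiv3 α (dxxzz u3) = dxxzz (pderiv3 α u3) := pderiv3_dxxzz hu3.sm α
  have hB2 : pderiv3 α (lap u2) = lap (pderiv3 α u2) := pderiv3_lap hu2.sm α
  have hv : GoodFn (pderiv3 α u3) := hu3.pd3 α
  have hw : GoodFn (pderiv3 α u2) := hu2.pd3 α
  -- u3 terms
  have h3xx : L2sq (pderiv3 α (pdx (pdx u3))) ≤ L2sq (pderiv3 α (dxxzz u3)) := by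
    rw [pdx_pderiv3_comm hu3.sm.dx, pdx_pderiv3_comm hu3.sm, hA3]
    exact dxxzz_ge_xx hv
  have h3zx : L2sq (pderiv3 α (pdz (pdx u3))) ≤ L2sq (pderiv3 α (dxxzz u3)) := by
    rw [pdz_pderiv3_comm hu3.sm.dx, pdx_pderiv3_comm hu3.sm, hA3]
    exact dxxzz_ge_xz hv
  -- u2 terms
  have h2xx : L2sq (pderiv3 α (pdx (pdx u2))) ≤ L2sq (pderiv3 α (lap u2)) := by
    rw [pdx_pderiv3_comm hu2.sm.dx, pdx_pderiv3_comm hu2.sm, hB2]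
    exact lap_ge_xx hw
  have h2zx : L2sq (pderiv3 α (pdz (pdx u2))) ≤ L2sq (pderiv3 α (lap u2)) := by
    rw [pdz_pderiv3_comm hu2.sm.dx, pdx_pderiv3_comm hu2.sm, hB2]
    exact lap_ge_xz hw
  -- u1 terms
  have hxy2 : L2sq (pderiv3 α (pdx (pdy u2))) ≤ L2sq (pderiv3 α (lap u2)) := by
    rw [pdx_pderiv3_comm hu2.sm.dy, pdy_pderiv3_comm hu2.sm,
      pdx_pdy_comm (hu2.sm.pd3 α), hB2]
    exact lap_ge_xy hw
  have hxz3 : L2sq (pderiv3 α (pdx (pdz u3))) ≤ L2sq (pderiv3 α (dxxzz u3)) := by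
    rw [pdx_pderiv3_comm hu3.sm.dz, pdz_pderiv3_comm hu3.sm,
      pdx_pdz_comm (hu3.sm.pd3 α), hA3]
    exact dxxzz_ge_xz hv
  have hzy2 : L2sq (pderiv3 α (pdz (pdy u2))) ≤ L2sq (pderiv3 α (lap u2)) := by
    rw [pdz_pderiv3_comm hu2.sm.dy, pdy_pderiv3_comm hu2.sm, hB2]
    exact lap_ge_yz hw
  have hzz3 : L2sq (pderiv3 α (pdz (pdz u3))) ≤ L2sq (pderiv3 α (dxxzz u3)) := by
    rw [pdz_pderiv3_comm hu3.sm.dz, pdz_pderiv3_comm hu3.sm, hA3]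
    exact dxxzz_ge_zz hv
  have h1xx : L2sq (pderiv3 α (pdx (pdx u1)))
      ≤ 2 * L2sq (pderiv3 α (pdx (pdy u2))) + 2 * L2sq (pderiv3 α (pdx (pdz u3))) := by
    have e1 : pdx (pdx u1) = -(pdx (pdy u2) + pdx (pdz u3)) := by
      rw [hdiv', pdx_neg, pdx_add hu2.sm.dy hu3.sm.dz]
    rw [e1, pderiv3_neg, L2sq_neg', pderiv3_add hu2.sm.dy.dx hu3.sm.dz.dx]
    exact L2sq_add_le ((hu2.dy.dx.pd3 α).tame) ((hu3.dz.dx.pd3 α).tame)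
  have h1zx : L2sq (pderiv3 α (pdz (pdx u1)))
      ≤ 2 * L2sq (pderiv3 α (pdz (pdy u2))) + 2 * L2sq (pderiv3 α (pdz (pdz u3))) := by
    have e1 : pdz (pdx u1) = -(pdz (pdy u2) + pdz (pdz u3)) := by
      rw [hdiv', pdz_neg, pdz_add hu2.sm.dy hu3.sm.dz]
    rw [e1, pderiv3_neg, L2sq_neg', pderiv3_add hu2.sm.dy.dz hu3.sm.dz.dz]
    exact L2sq_add_le ((hu2.dy.dz.pd3 α).tame) ((hu3.dz.dz.pd3 α).tame)
  linarith

/-- Bound for `‖Δ ∂_c u3‖` with `c ∈ {x, z}` : the common interpolation bound. -/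
lemma lap_pdz_u3_bound (hu3 : GoodFn u3) {X G1 G2 : ℝ}
    (hG1 : gradL2norm (dxxzz u3) ≤ G1) (hG2 : gradL2norm (lap u3) ≤ G2)
    (hG10 : 0 ≤ G1) (hG20 : 0 ≤ G2)
    (hX : Real.sqrt (G2 * G1) ≤ X) :
    L2norm (lap (pdz u3)) ≤ G1 + X := by
  have hsplit : lap (pdz u3) = pdz (dxxzz u3) + pdy (pdy (pdz u3)) := by
    rw [lap_split (pdz u3), dxxzz_pdz_comm hu3.sm]
  have hP : L2norm (pdz (dxxzz u3)) ≤ G1 :=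
    le_trans (pdz_le_grad hu3.dxxzz') hG1
  have hyyy : L2sq (pdy (pdy (pdy u3))) ≤ G2^2 := by
    calc L2sq (pdy (pdy (pdy u3))) ≤ L2sq (lap (pdy u3)) := lap_ge_yy hu3.dy
      _ = L2sq (pdy (lap u3)) := by rw [lap_pdy_comm hu3.sm]
      _ ≤ (gradL2norm (lap u3))^2 := pdy_sq_le_grad hu3.lap'
      _ ≤ G2^2 := by nlinarith [show (0:ℝ) ≤ gradL2norm (lap u3) from Real.sqrt_nonneg _]
  have hyzz : L2sq (pdy (pdz (pdz u3))) ≤ G1^2 := by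
    have e : pdy (pdz (pdz u3)) = pdz (pdz (pdy u3)) := by
      rw [pdy_pdz_comm hu3.dz.sm, pdy_pdz_comm hu3.sm]
    calc L2sq (pdy (pdz (pdz u3))) = L2sq (pdz (pdz (pdy u3))) := by rw [e]
      _ ≤ L2sq (dxxzz (pdy u3)) := dxxzz_ge_zz hu3.dy
      _ = L2sq (pdy (dxxzz u3)) := by rw [dxxzz_pdy_comm hu3.sm]
      _ ≤ (gradL2norm (dxxzz u3))^2 := pdy_sq_le_grad hu3.dxxzz'
      _ ≤ G1^2 := by nlinarith [show (0:ℝ) ≤ gradL2norm (dxxzz u3) from Real.sqrt_nonneg _]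
  have hQ : L2norm (pdy (pdy (pdz u3))) ≤ X := by
    have h1 : L2sq (pdy (pdy (pdz u3))) ≤ G2 * G1 := by
      calc L2sq (pdy (pdy (pdz u3)))
          ≤ Real.sqrt (L2sq (pdy (pdy (pdy u3)))) * Real.sqrt (L2sq (pdy (pdz (pdz u3)))) :=
            interp_z hu3
        _ ≤ G2 * G1 := by
            apply mul_le_mul ?_ ?_ (Real.sqrt_nonneg _) hG20
            · calc Real.sqrt (L2sq (pdy (pdy (pdy u3)))) ≤ Real.sqrt (G2^2) :=
                    Real.sqrt_le_sqrt hyyy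
                _ = G2 := Real.sqrt_sq hG20
            · calc Real.sqrt (L2sq (pdy (pdz (pdz u3)))) ≤ Real.sqrt (G1^2) :=
                    Real.sqrt_le_sqrt hyzz
                _ = G1 := Real.sqrt_sq hG10
    calc L2norm (pdy (pdy (pdz u3))) ≤ Real.sqrt (G2 * G1) := Real.sqrt_le_sqrt h1
      _ ≤ X := hX
  calc L2norm (lap (pdz u3))
      = L2norm (pdz (dxxzz u3) + pdy (pdy (pdz u3))) := by rw [hsplit]
    _ ≤ L2norm (pdz (dxxzz u3)) + L2norm (pdy (pdy (pdz u3))) :=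
        L2norm_triangle (hu3.dxxzz'.dz.tame) (hu3.dz.dy.dy.tame)
    _ ≤ G1 + X := add_le_add hP hQ

lemma lap_pdx_u3_bound (hu3 : GoodFn u3) {X G1 G2 : ℝ}
    (hG1 : gradL2norm (dxxzz u3) ≤ G1) (hG2 : gradL2norm (lap u3) ≤ G2)
    (hG10 : 0 ≤ G1) (hG20 : 0 ≤ G2)
    (hX : Real.sqrt (G2 * G1) ≤ X) :
    L2norm (lap (pdx u3)) ≤ G1 + X := by
  have hsplit : lap (pdx u3) = pdx (dxxzz u3) + pdy (pdy (pdx u3)) := by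
    rw [lap_split (pdx u3), dxxzz_pdx_comm hu3.sm]
  have hP : L2norm (pdx (dxxzz u3)) ≤ G1 :=
    le_trans (pdx_le_grad hu3.dxxzz') hG1
  have hyyy : L2sq (pdy (pdy (pdy u3))) ≤ G2^2 := by
    calc L2sq (pdy (pdy (pdy u3))) ≤ L2sq (lap (pdy u3)) := lap_ge_yy hu3.dy
      _ = L2sq (pdy (lap u3)) := by rw [lap_pdy_comm hu3.sm]
      _ ≤ (gradL2norm (lap u3))^2 := pdy_sq_le_grad hu3.lap'
      _ ≤ G2^2 := by nlinarith [show (0:ℝ) ≤ gradL2norm (lap u3) from Real.sqrt_nonneg _]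
  have hyxx : L2sq (pdy (pdx (pdx u3))) ≤ G1^2 := by
    have e : pdy (pdx (pdx u3)) = pdx (pdx (pdy u3)) := by
      rw [← pdx_pdy_comm hu3.dx.sm, ← pdx_pdy_comm hu3.sm]
    calc L2sq (pdy (pdx (pdx u3))) = L2sq (pdx (pdx (pdy u3))) := by rw [e]
      _ ≤ L2sq (dxxzz (pdy u3)) := dxxzz_ge_xx hu3.dy
      _ = L2sq (pdy (dxxzz u3)) := by rw [dxxzz_pdy_comm hu3.sm]
      _ ≤ (gradL2norm (dxxzz u3))^2 := pdy_sq_le_grad hu3.dxxzz'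
      _ ≤ G1^2 := by nlinarith [show (0:ℝ) ≤ gradL2norm (dxxzz u3) from Real.sqrt_nonneg _]
  have hQ : L2norm (pdy (pdy (pdx u3))) ≤ X := by
    have h1 : L2sq (pdy (pdy (pdx u3))) ≤ G2 * G1 := by
      calc L2sq (pdy (pdy (pdx u3)))
          ≤ Real.sqrt (L2sq (pdy (pdy (pdy u3)))) * Real.sqrt (L2sq (pdy (pdx (pdx u3)))) :=
            interp_x hu3
        _ ≤ G2 * G1 := by
            apply mul_le_mul ?_ ?_ (Real.sqrt_nonneg _) hG20
            · calc Real.sqrt (L2sq (pdy (pdy (pdy u3)))) ≤ Real.sqrt (G2^2) :=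
                    Real.sqrt_le_sqrt hyyy
                _ = G2 := Real.sqrt_sq hG20
            · calc Real.sqrt (L2sq (pdy (pdx (pdx u3)))) ≤ Real.sqrt (G1^2) :=
                    Real.sqrt_le_sqrt hyxx
                _ = G1 := Real.sqrt_sq hG10
    calc L2norm (pdy (pdy (pdx u3))) ≤ Real.sqrt (G2 * G1) := Real.sqrt_le_sqrt h1
      _ ≤ X := hX
  calc L2norm (lap (pdx u3))
      = L2norm (pdx (dxxzz u3) + pdy (pdy (pdx u3))) := by rw [hsplit]
    _ ≤ L2norm (pdx (dxxzz u3)) + L2norm (pdy (pdy (pdx u3))) :=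
        L2norm_triangle (hu3.dxxzz'.dx.tame) (hu3.dx.dy.dy.tame)
    _ ≤ G1 + X := add_le_add hP hQ

end


/-- Velocity estimates in terms of `(u², u³)` for a divergence-free vector field
`u = (u¹,u²,u³)` with vanishing `x`-average:
(i) `‖∇^m(∂_x,∂_z)∂_x u‖_{L²} ≤ C(‖∇^m(∂_x²+∂_z²)u³‖_{L²} + ‖∇^m Δu²‖_{L²})` for all `m`;
(ii) `‖Δ∂_x u‖_{L²} + ‖Δ∂_z u³‖_{L²}
      ≤ C(ν^{−1/3}‖∇(∂_x²+∂_z²)u³‖_{L²} + ν^{1/3}‖∇Δu³‖_{L²} + ‖∇Δu²‖_{L²})`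
for every `ν ∈ (0,1]`. -/
theorem stmt17 : ∃ C : ℝ, 0 < C ∧ ∀ u1 u2 u3 : ℝ → ℝ → ℝ → ℂ,
    GoodFn u1 → GoodFn u2 → GoodFn u3 →
    (∀ x y z, pdx u1 x y z + pdy u2 x y z + pdz u3 x y z = 0) →
    (∀ y z : ℝ, (∫ x in Set.Ioc (0:ℝ) 1, u1 x y z) = 0) →
    (∀ y z : ℝ, (∫ x in Set.Ioc (0:ℝ) 1, u2 x y z) = 0) →
    (∀ y z : ℝ, (∫ x in Set.Ioc (0:ℝ) 1, u3 x y z) = 0) →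
    (∀ m : ℕ,
      Real.sqrt (∑ α ∈ multiIndicesEq m,
          (L2sq (pderiv3 α (pdx (pdx u1))) + L2sq (pderiv3 α (pdz (pdx u1)))
           + L2sq (pderiv3 α (pdx (pdx u2))) + L2sq (pderiv3 α (pdz (pdx u2)))
           + L2sq (pderiv3 α (pdx (pdx u3))) + L2sq (pderiv3 α (pdz (pdx u3)))))
        ≤ C * (Real.sqrt (∑ α ∈ multiIndicesEq m, L2sq (pderiv3 α (dxxzz u3)))
             + Real.sqrt (∑ α ∈ multiIndicesEq m, L2sq (pderiv3 α (lap u2))))) ∧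
    (∀ ν : ℝ, 0 < ν → ν ≤ 1 →
      Real.sqrt (L2sq (lap (pdx u1)) + L2sq (lap (pdx u2)) + L2sq (lap (pdx u3)))
          + L2norm (lap (pdz u3))
        ≤ C * (ν ^ (-(1:ℝ)/3) * gradL2norm (dxxzz u3)
             + ν ^ ((1:ℝ)/3) * gradL2norm (lap u3) + gradL2norm (lap u2))) := by
  refine ⟨100, by norm_num, ?_⟩
  intro u1 u2 u3 hu1 hu2 hu3 hdiv _ _ _
  have hdiv' : pdx u1 = -(pdy u2 + pdz u3) := by
    funext x y z
    have h := hdiv x y z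
    show pdx u1 x y z = -(pdy u2 x y z + pdz u3 x y z)
    linear_combination h
  constructor
  · -- Part (i)
    intro m
    have hA0 : 0 ≤ ∑ α ∈ multiIndicesEq m, L2sq (pderiv3 α (dxxzz u3)) :=
      Finset.sum_nonneg fun α _ => L2sq_nonneg_s17 ((hu3.dxxzz'.pd3 α).tame)
    have hB0 : 0 ≤ ∑ α ∈ multiIndicesEq m, L2sq (pderiv3 α (lap u2)) :=
      Finset.sum_nonneg fun α _ => L2sq_nonneg_s17 ((hu2.lap'.pd3 α).tame)
    have hsum : ∑ α ∈ multiIndicesEq m,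
        (L2sq (pderiv3 α (pdx (pdx u1))) + L2sq (pderiv3 α (pdz (pdx u1)))
         + L2sq (pderiv3 α (pdx (pdx u2))) + L2sq (pderiv3 α (pdz (pdx u2)))
         + L2sq (pderiv3 α (pdx (pdx u3))) + L2sq (pderiv3 α (pdz (pdx u3))))
        ≤ 6 * ((∑ α ∈ multiIndicesEq m, L2sq (pderiv3 α (dxxzz u3)))
             + ∑ α ∈ multiIndicesEq m, L2sq (pderiv3 α (lap u2))) := by
      have step1 := Finset.sum_le_sum (s := multiIndicesEq m)
        (fun α _ => partI_alpha hu1 hu2 hu3 hdiv' α)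
      have step2 : ∑ α ∈ multiIndicesEq m,
          (6 * (L2sq (pderiv3 α (dxxzz u3)) + L2sq (pderiv3 α (lap u2))))
          = 6 * ((∑ α ∈ multiIndicesEq m, L2sq (pderiv3 α (dxxzz u3)))
             + ∑ α ∈ multiIndicesEq m, L2sq (pderiv3 α (lap u2))) := by
        rw [← Finset.mul_sum, Finset.sum_add_distrib]
      exact le_trans step1 (le_of_eq step2)
    have h6 : Real.sqrt 6 ≤ 3 := by
      nlinarith [Real.sq_sqrt (show (0:ℝ) ≤ 6 by norm_num), Real.sqrt_nonneg 6]
    calc Real.sqrt (∑ α ∈ multiIndicesEq m,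
          (L2sq (pderiv3 α (pdx (pdx u1))) + L2sq (pderiv3 α (pdz (pdx u1)))
           + L2sq (pderiv3 α (pdx (pdx u2))) + L2sq (pderiv3 α (pdz (pdx u2)))
           + L2sq (pderiv3 α (pdx (pdx u3))) + L2sq (pderiv3 α (pdz (pdx u3)))))
        ≤ Real.sqrt (6 * ((∑ α ∈ multiIndicesEq m, L2sq (pderiv3 α (dxxzz u3)))
             + ∑ α ∈ multiIndicesEq m, L2sq (pderiv3 α (lap u2)))) :=
          Real.sqrt_le_sqrt hsum
      _ = Real.sqrt 6 * Real.sqrt ((∑ α ∈ multiIndicesEq m, L2sq (pderiv3 α (dxxzz u3)))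
             + ∑ α ∈ multiIndicesEq m, L2sq (pderiv3 α (lap u2))) :=
          Real.sqrt_mul (by norm_num) _
      _ ≤ 3 * (Real.sqrt (∑ α ∈ multiIndicesEq m, L2sq (pderiv3 α (dxxzz u3)))
             + Real.sqrt (∑ α ∈ multiIndicesEq m, L2sq (pderiv3 α (lap u2)))) := by
          apply mul_le_mul h6 (sqrt_add_le hA0 hB0) (Real.sqrt_nonneg _) (by norm_num)
      _ ≤ 100 * (Real.sqrt (∑ α ∈ multiIndicesEq m, L2sq (pderiv3 α (dxxzz u3)))
             + Real.sqrt (∑ α ∈ multiIndicesEq m, L2sq (pderiv3 α (lap u2)))) := by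
          nlinarith [Real.sqrt_nonneg (∑ α ∈ multiIndicesEq m, L2sq (pderiv3 α (dxxzz u3))),
            Real.sqrt_nonneg (∑ α ∈ multiIndicesEq m, L2sq (pderiv3 α (lap u2)))]
  · -- Part (ii)
    intro ν hν hν1
    have hG10 : 0 ≤ gradL2norm (dxxzz u3) := Real.sqrt_nonneg _
    have hG20 : 0 ≤ gradL2norm (lap u3) := Real.sqrt_nonneg _
    have hG30 : 0 ≤ gradL2norm (lap u2) := Real.sqrt_nonneg _
    have ha : 1 ≤ ν ^ (-(1:ℝ)/3) :=
      Real.one_le_rpow_of_pos_of_le_one_of_nonpos hν hν1 (by norm_num)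
    have ha0 : 0 ≤ ν ^ (-(1:ℝ)/3) := le_trans zero_le_one ha
    have hb0 : 0 ≤ ν ^ ((1:ℝ)/3) := Real.rpow_nonneg hν.le _
    have hab : ν ^ (-(1:ℝ)/3) * ν ^ ((1:ℝ)/3) = 1 := by
      rw [← Real.rpow_add hν]
      norm_num
    set G1 := gradL2norm (dxxzz u3) with hG1def
    set G2 := gradL2norm (lap u3) with hG2def
    set G3 := gradL2norm (lap u2) with hG3def
    set X : ℝ := (ν ^ (-(1:ℝ)/3) * G1 + ν ^ ((1:ℝ)/3) * G2) / 2 with hXdef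
    have hX : Real.sqrt (G2 * G1) ≤ X := by
      have e : (ν ^ (-(1:ℝ)/3) * G1) * (ν ^ ((1:ℝ)/3) * G2)
          = (ν ^ (-(1:ℝ)/3) * ν ^ ((1:ℝ)/3)) * (G2 * G1) := by ring
      rw [hab, one_mul] at e
      rw [← e]
      exact sqrt_mul_le_half_add (mul_nonneg ha0 hG10) (mul_nonneg hb0 hG20)
    have hB3z : L2norm (lap (pdz u3)) ≤ G1 + X :=
      lap_pdz_u3_bound hu3 le_rfl le_rfl hG10 hG20 hX
    have hB3x : L2norm (lap (pdx u3)) ≤ G1 + X :=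
      lap_pdx_u3_bound hu3 le_rfl le_rfl hG10 hG20 hX
    have hB2 : L2norm (lap (pdx u2)) ≤ G3 := by
      rw [lap_pdx_comm hu2.sm]
      exact pdx_le_grad hu2.lap'
    have hB1 : L2norm (lap (pdx u1)) ≤ G3 + (G1 + X) := by
      have e : lap (pdx u1) = -(lap (pdy u2) + lap (pdz u3)) := by
        rw [hdiv', lap_neg', lap_add' hu2.sm.dy hu3.sm.dz]
      have e2 : L2norm (lap (pdx u1)) = L2norm (lap (pdy u2) + lap (pdz u3)) := by
        rw [e]
        unfold L2norm
        rw [L2sq_neg']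
      rw [e2]
      have hBy2 : L2norm (lap (pdy u2)) ≤ G3 := by
        rw [lap_pdy_comm hu2.sm]
        exact pdy_le_grad hu2.lap'
      calc L2norm (lap (pdy u2) + lap (pdz u3))
          ≤ L2norm (lap (pdy u2)) + L2norm (lap (pdz u3)) :=
            L2norm_triangle (hu2.dy.lap'.tame) (hu3.dz.lap'.tame)
        _ ≤ G3 + (G1 + X) := add_le_add hBy2 hB3z
    have n1 : 0 ≤ L2sq (lap (pdx u1)) := L2sq_nonneg_s17 (hu1.dx.lap'.tame)
    have n2 : 0 ≤ L2sq (lap (pdx u2)) := L2sq_nonneg_s17 (hu2.dx.lap'.tame)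
    have n3 : 0 ≤ L2sq (lap (pdx u3)) := L2sq_nonneg_s17 (hu3.dx.lap'.tame)
    have hsplit : Real.sqrt (L2sq (lap (pdx u1)) + L2sq (lap (pdx u2)) + L2sq (lap (pdx u3)))
        ≤ L2norm (lap (pdx u1)) + L2norm (lap (pdx u2)) + L2norm (lap (pdx u3)) := by
      calc Real.sqrt (L2sq (lap (pdx u1)) + L2sq (lap (pdx u2)) + L2sq (lap (pdx u3)))
          ≤ Real.sqrt (L2sq (lap (pdx u1)) + L2sq (lap (pdx u2)))
              + Real.sqrt (L2sq (lap (pdx u3))) := sqrt_add_le (add_nonneg n1 n2) n3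
        _ ≤ (Real.sqrt (L2sq (lap (pdx u1))) + Real.sqrt (L2sq (lap (pdx u2))))
              + Real.sqrt (L2sq (lap (pdx u3))) :=
            add_le_add_left (sqrt_add_le n1 n2) _
        _ = L2norm (lap (pdx u1)) + L2norm (lap (pdx u2)) + L2norm (lap (pdx u3)) := rfl
    have hG1a : G1 ≤ ν ^ (-(1:ℝ)/3) * G1 := by nlinarith
    calc Real.sqrt (L2sq (lap (pdx u1)) + L2sq (lap (pdx u2)) + L2sq (lap (pdx u3)))
          + L2norm (lap (pdz u3))
        ≤ (L2norm (lap (pdx u1)) + L2norm (lap (pdx u2)) + L2norm (lap (pdx u3)))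
          + (G1 + X) := add_le_add hsplit hB3z
      _ ≤ ((G3 + (G1 + X)) + G3 + (G1 + X)) + (G1 + X) := by
          have := add_le_add (add_le_add hB1 hB2) hB3x
          linarith
      _ ≤ 100 * (ν ^ (-(1:ℝ)/3) * G1 + ν ^ ((1:ℝ)/3) * G2 + G3) := by
          rw [hXdef]
          nlinarith [mul_nonneg ha0 hG10, mul_nonneg hb0 hG20]

end
end
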